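/- arXiv:1407.6701 — 3 statements merged into one kernel-verified Lean document; each statement's English description precedes it below -/
import Mathlib

section
/- Let Θ be a finite simple graph with vertex set V of cardinality n, and suppose that every vertex of the complementary graph Θ̄ has degree at most c₀ (i.e., every v ∈ V is non-adjacent in Θ to at most c₀ vertices w ≠ v). Then the growth rate of the right-angled Artin group A(Θ) relative to its standard generating set S = {s_v : v ∈ V} is at most log(2c₀ + 2) + 1; that is, limsup_{R→∞} (log #B_R(A(Θ), S))/R ≤ log(2c₀ + 2) + 1. -/
/-- The ball of radius `R` in a group `G` relative to a subset `S`: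
elements expressible as products of at most `R` elements of `S ∪ S⁻¹`. -/
def ball {G : Type*} [Group G] (S : Set G) (R : ℕ) : Set G :=
  {g | ∃ l : List G, l.length ≤ R ∧ (∀ t ∈ l, t ∈ S ∪ S⁻¹) ∧ l.prod = g}

/-- The commutator relators of the right-angled Artin group on a simple graph `Θ`. -/
def raagRels {V : Type*} (Θ : SimpleGraph V) : Set (FreeGroup V) :=
  {r | ∃ v w, Θ.Adj v w ∧
    r = FreeGroup.of v * FreeGroup.of w * (FreeGroup.of v)⁻¹ * (FreeGroup.of w)⁻¹}

/-- The right-angled Artin group `A(Θ)` associated to a simple graph `Θ`. -/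
abbrev RAAG {V : Type*} (Θ : SimpleGraph V) : Type _ := PresentedGroup (raagRels Θ)

/-- The standard generating set `S = {s_v : v ∈ V}` of `A(Θ)`. -/
def raagGens {V : Type*} (Θ : SimpleGraph V) : Set (RAAG Θ) :=
  Set.range (PresentedGroup.of (rels := raagRels Θ))

noncomputable section
attribute [local instance] Classical.propDecidable

namespace CountCodes
open Real

variable {γ : Type*} [Fintype γ] (pos : γ → ℕ) (d : ℕ)

def gd (R : ℕ) (w : List (Finset γ)) : Prop :=
  List.Chain' (fun E E' => ∀ p ∈ E', pos p < E.card) w ∧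
    (∀ E ∈ w, E.Nonempty) ∧ (w.map Finset.card).sum ≤ R

def SS (R k : ℕ) : Finset (List (Finset γ)) :=
  ((Finset.univ : Finset (Fin k → Finset γ)).image List.ofFn).filter (gd pos R)

lemma mem_SS {R k : ℕ} {w : List (Finset γ)} :
    w ∈ SS pos R k ↔ w.length = k ∧ gd pos R w := by
  rw [SS, Finset.mem_filter]
  constructor
  · rintro ⟨h1, h2⟩
    refine ⟨?_, h2⟩
    obtain ⟨f, _, rfl⟩ := Finset.mem_image.1 h1
    simp
  · rintro ⟨h1, h2⟩
    refine ⟨Finset.mem_image.2 ⟨fun i => w[(i : ℕ)]'(h1 ▸ i.2), Finset.mem_univ _, ?_⟩, h2⟩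
    subst h1
    exact List.ofFn_getElem

/-- total size of a code -/
def tsz (w : List (Finset γ)) : ℕ := (w.map Finset.card).sum

/-- size of the last block -/
def lc (w : List (Finset γ)) : ℕ := (w.getLastD ∅).card

def x : ℝ := d * Real.exp 1

def wt (w : List (Finset γ)) : ℝ := (x d)⁻¹ ^ (tsz w) * Real.exp 1 ^ (lc w)

variable (hd : 1 ≤ d)
include hd

lemma x_pos : 0 < x d := by
  have h1 := Real.exp_pos 1
  have h2 : (0:ℝ) < d := by exact_mod_cast Nat.lt_of_lt_of_le Nat.zero_lt_one hd
  exact mul_pos h2 h1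

lemma one_le_x : 1 ≤ x d := by
  have h1 : (1:ℝ) ≤ d := by exact_mod_cast hd
  have h2 : (1:ℝ) ≤ Real.exp 1 := by
    rw [show (1:ℝ) = Real.exp 0 by simp]
    exact Real.exp_le_exp.2 (by norm_num)
  calc (1:ℝ) = 1 * 1 := by ring
    _ ≤ d * Real.exp 1 := by
        exact mul_le_mul h1 h2 (by norm_num) (le_trans (by norm_num) h1)

lemma wt_pos (w : List (Finset γ)) : 0 < wt d w := by
  have := x_pos d hd
  rw [wt]
  positivity

/-- binomial-type bound: sum over subsets of a finset -/
lemma sum_powerset_le (s : Finset γ) :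
    ∑ E ∈ s.powerset, (Real.exp 1 / x d) ^ E.card
      = (1 + Real.exp 1 / x d) ^ s.card := by
  classical
  have h := Finset.prod_add (fun _ : γ => Real.exp 1 / x d) (fun _ : γ => (1:ℝ)) s
  simp only [Finset.prod_const, one_pow, mul_one, Finset.prod_const_one] at h
  rw [← h, add_comm]

lemma one_add_le_exp_pow (m c : ℕ) (hc : c ≤ d * m) :
    (1 + Real.exp 1 / x d) ^ c ≤ Real.exp 1 ^ m := by
  have hx := x_pos d hd
  have hq : 0 < Real.exp 1 / x d := by positivity
  have hdne : (d:ℝ) ≠ 0 := by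
    have : (0:ℝ) < d := by exact_mod_cast Nat.lt_of_lt_of_le Nat.zero_lt_one hd
    linarith
  have hexpne : Real.exp 1 ≠ 0 := (Real.exp_pos 1).ne'
  calc (1 + Real.exp 1 / x d) ^ c
      ≤ (1 + Real.exp 1 / x d) ^ (d * m) := pow_le_pow_right₀ (by linarith) hc
    _ ≤ Real.exp (Real.exp 1 / x d) ^ (d * m) :=
        pow_le_pow_left₀ (by linarith)
          (by linarith [Real.add_one_le_exp (Real.exp 1 / x d)]) _
    _ = Real.exp (((d * m : ℕ) : ℝ) * (Real.exp 1 / x d)) := (Real.exp_nat_mul _ _).symm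
    _ = Real.exp (((m : ℕ) : ℝ) * 1) := by
        congr 1
        rw [x]
        push_cast
        field_simp
    _ = Real.exp 1 ^ m := Real.exp_nat_mul _ _

def K₀ : ℝ := (1 + Real.exp 1 / x d) ^ (Fintype.card γ)

lemma one_le_K₀ : 1 ≤ K₀ (γ := γ) d := by
  have hx := x_pos d hd
  have hq : 0 < Real.exp 1 / x d := by positivity
  exact one_le_pow₀ (by linarith)

variable (hpos : ∀ m : ℕ, ((Finset.univ : Finset γ).filter (fun p => pos p < m)).card ≤ d * m)
include hpos

lemma SS_zero (R : ℕ) : SS pos R 0 = {[]} := by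
  ext w
  rw [mem_SS, Finset.mem_singleton]
  constructor
  · rintro ⟨h1, _⟩; exact List.length_eq_zero_iff.1 h1
  · rintro rfl
    exact ⟨rfl, List.isChain_nil, by simp, by simp [gd]⟩

omit hpos in
lemma dropLast_mem {R k : ℕ} {w : List (Finset γ)} (hw : w ∈ SS pos R (k+1)) :
    w.dropLast ∈ SS pos R k := by
  rw [mem_SS] at hw ⊢
  obtain ⟨hlen, hch, hne, hsum⟩ := hw
  have hwnil : w ≠ [] := by intro h; rw [h] at hlen; simp at hlen
  refine ⟨by rw [List.length_dropLast, hlen]; omega, ?_, ?_, ?_⟩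
  · exact hch.prefix (List.dropLast_prefix w)
  · exact fun E hE => hne E (List.dropLast_sublist w |>.mem hE)
  · have hsplit := List.dropLast_append_getLast hwnil
    have hle : (w.dropLast.map Finset.card).sum + (w.getLast hwnil).card ≤ R := by
      calc (w.dropLast.map Finset.card).sum + (w.getLast hwnil).card
          = ((w.dropLast ++ [w.getLast hwnil]).map Finset.card).sum := by
            rw [List.map_append, List.sum_append]; simp
        _ = (w.map Finset.card).sum := by rw [hsplit]
        _ ≤ R := hsum
    omega

lemma sum_wt_succ (R k : ℕ) :
    (∑ w ∈ SS pos R (k+1), wt d w) ≤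
      ∑ w' ∈ SS pos R k, (if w' = [] then K₀ (γ := γ) d else wt d w') := by
  classical
  have hx := x_pos d hd
  rw [← Finset.sum_fiberwise_of_maps_to (fun w hw => dropLast_mem pos d hd hw) (wt d)]
  apply Finset.sum_le_sum
  intro w' hw'
  set allowed : Finset γ :=
    (if w' = [] then Finset.univ else Finset.univ.filter (fun p => pos p < lc w')) with hallowed
  have hsub : (SS pos R (k+1)).filter (fun w => w.dropLast = w') ⊆
      allowed.powerset.image (fun E => w' ++ [E]) := by
    intro w hw
    rw [Finset.mem_filter] at hw
    obtain ⟨hwS, hwd⟩ := hw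
    rw [mem_SS] at hwS
    obtain ⟨hlen, hch, hne, hsum⟩ := hwS
    have hwnil : w ≠ [] := by intro h; rw [h] at hlen; simp at hlen
    have hwsplit : w = w' ++ [w.getLast hwnil] := by
      conv_lhs => rw [← List.dropLast_append_getLast hwnil, hwd]
    rw [Finset.mem_image]
    refine ⟨w.getLast hwnil, ?_, hwsplit.symm⟩
    rw [Finset.mem_powerset]
    by_cases hnil : w' = []
    · rw [hallowed, if_pos hnil]
      exact Finset.subset_univ _
    · rw [hallowed, if_neg hnil]
      intro p hp
      rw [Finset.mem_filter]
      refine ⟨Finset.mem_univ _, ?_⟩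
      have hch' := hch
      rw [hwsplit] at hch'; unfold List.Chain' at hch'; rw [List.isChain_append] at hch'
      obtain ⟨_, _, h3⟩ := hch'
      have := h3 (w'.getLast hnil) (by rw [List.getLast?_eq_getLast hnil]; rfl)
        (w.getLast hwnil) (by simp) p hp
      have hlc : lc w' = (w'.getLast hnil).card := by
        rw [lc, List.getLastD_eq_getLast?, List.getLast?_eq_getLast hnil]
        rfl
      rw [hlc]
      exact this
  have hsumne : ∀ E ∈ w'.dropLast, True := fun _ _ => trivial
  have hwtval : ∀ E : Finset γ, wt d (w' ++ [E]) =
      (x d)⁻¹ ^ (tsz w') * (Real.exp 1 / x d) ^ E.card := by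
    intro E
    have h1 : tsz (w' ++ [E]) = tsz w' + E.card := by
      rw [tsz, tsz, List.map_append, List.sum_append]; simp
    have h2 : lc (w' ++ [E]) = E.card := by
      rw [lc, List.getLastD_concat]
    rw [wt, h1, h2, pow_add, div_pow, inv_pow, inv_pow]
    ring
  calc ∑ w ∈ (SS pos R (k+1)).filter (fun w => w.dropLast = w'), wt d w
      ≤ ∑ w ∈ allowed.powerset.image (fun E => w' ++ [E]), wt d w :=
        Finset.sum_le_sum_of_subset_of_nonneg hsub (fun w _ _ => (wt_pos d hd w).le)
    _ = ∑ E ∈ allowed.powerset, wt d (w' ++ [E]) := by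
        rw [Finset.sum_image]
        intro E1 _ E2 _ h
        simpa using List.append_cancel_left h
    _ = ∑ E ∈ allowed.powerset, (x d)⁻¹ ^ tsz w' * (Real.exp 1 / x d) ^ E.card :=
        Finset.sum_congr rfl (fun E _ => hwtval E)
    _ = (x d)⁻¹ ^ tsz w' * ∑ E ∈ allowed.powerset, (Real.exp 1 / x d) ^ E.card := by
        rw [Finset.mul_sum]
    _ = (x d)⁻¹ ^ tsz w' * (1 + Real.exp 1 / x d) ^ allowed.card := by
        rw [sum_powerset_le d hd]
    _ ≤ (if w' = [] then K₀ (γ := γ) d else wt d w') := by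
        by_cases hnil : w' = []
        · rw [if_pos hnil, hallowed, if_pos hnil]
          subst hnil
          simp only [tsz, List.map_nil, List.sum_nil, pow_zero, one_mul, Finset.card_univ]
          exact le_of_eq rfl
        · rw [if_neg hnil, hallowed, if_neg hnil]
          have hcard : (Finset.univ.filter (fun p => pos p < lc w')).card ≤ d * lc w' :=
            hpos (lc w')
          have hb := one_add_le_exp_pow d hd (lc w') _ hcard
          rw [wt]
          have hnn : (0:ℝ) ≤ (x d)⁻¹ ^ tsz w' := by positivity
          exact mul_le_mul_of_nonneg_left hb hnn

lemma sum_wt_le (R k : ℕ) : (∑ w ∈ SS pos R k, wt d w) ≤ K₀ (γ := γ) d := by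
  induction k with
  | zero =>
      rw [SS_zero pos d hd hpos, Finset.sum_singleton]
      have h1 : wt d ([] : List (Finset γ)) = 1 := by simp [wt, tsz, lc]
      rw [h1]
      exact one_le_K₀ d hd
  | succ k ih =>
      refine le_trans (sum_wt_succ pos d hd hpos R k) ?_
      rcases Nat.eq_zero_or_pos k with rfl | hk
      · rw [SS_zero pos d hd hpos, Finset.sum_singleton, if_pos rfl]
      · have hcg : ∀ w' ∈ SS pos R k, (if w' = [] then K₀ (γ := γ) d else wt d w') = wt d w' := by
          intro w' hw'
          rw [if_neg]
          intro h
          rw [mem_SS] at hw'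
          rw [h] at hw'
          simp at hw'
          omega
        rw [Finset.sum_congr rfl hcg]
        exact ih

lemma card_SS_le (R k : ℕ) : ((SS pos R k).card : ℝ) ≤ x d ^ R * K₀ (γ := γ) d := by
  have hx := x_pos d hd
  have h1 : ((SS pos R k).card : ℝ) = ∑ _w ∈ SS pos R k, (1:ℝ) := by simp
  rw [h1]
  have h2 : ∀ w ∈ SS pos R k, (1:ℝ) ≤ x d ^ R * wt d w := by
    intro w hw
    rw [mem_SS] at hw
    have ht : tsz w ≤ R := hw.2.2.2
    have e1 : (1:ℝ) ≤ Real.exp 1 ^ lc w :=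
      one_le_pow₀ (by linarith [Real.add_one_le_exp (1:ℝ)])
    have hinv : (x d)⁻¹ ≤ 1 := by
      rw [inv_le_one_iff₀]
      right
      exact one_le_x d hd
    have h3 : (x d)⁻¹ ^ R ≤ (x d)⁻¹ ^ tsz w :=
      pow_le_pow_of_le_one (by positivity) hinv ht
    rw [wt]
    calc (1:ℝ) = (x d * (x d)⁻¹) ^ R := by rw [mul_inv_cancel₀ hx.ne', one_pow]
      _ = x d ^ R * (x d)⁻¹ ^ R := mul_pow _ _ _
      _ ≤ x d ^ R * (x d)⁻¹ ^ tsz w :=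
          mul_le_mul_of_nonneg_left h3 (by positivity)
      _ ≤ x d ^ R * ((x d)⁻¹ ^ tsz w * Real.exp 1 ^ lc w) := by
          rw [← mul_assoc]
          exact le_mul_of_one_le_right (by positivity) e1
  calc (∑ _w ∈ SS pos R k, (1:ℝ)) ≤ ∑ w ∈ SS pos R k, x d ^ R * wt d w :=
        Finset.sum_le_sum h2
    _ = x d ^ R * ∑ w ∈ SS pos R k, wt d w := by rw [Finset.mul_sum]
    _ ≤ x d ^ R * K₀ (γ := γ) d :=
        mul_le_mul_of_nonneg_left (sum_wt_le pos d hd hpos R k) (by positivity)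

def TT (R : ℕ) : Finset (List (Finset γ)) :=
  (Finset.range (R+1)).biUnion (fun k => SS pos R k)

omit hd hpos in
lemma mem_TT {R : ℕ} {w : List (Finset γ)} (hw : gd pos R w) : w ∈ TT pos R := by
  have hlen : w.length ≤ (w.map Finset.card).sum := by
    have hne := hw.2.1
    clear hw
    induction w with
    | nil => simp
    | cons E t ih =>
        have h1 : 1 ≤ E.card := Finset.card_pos.2 (hne E (List.mem_cons_self))
        have h2 := ih (fun X hX => hne X (List.mem_cons_of_mem _ hX))
        simp only [List.length_cons, List.map_cons, List.sum_cons]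
        omega
  have hR : w.length ≤ R := le_trans hlen hw.2.2
  exact Finset.mem_biUnion.2 ⟨w.length, Finset.mem_range.2 (by omega),
    (mem_SS pos).2 ⟨rfl, hw⟩⟩

lemma card_TT_le (R : ℕ) :
    ((TT pos R).card : ℝ) ≤ (R + 1 : ℝ) * (x d ^ R * K₀ (γ := γ) d) := by
  have h := Finset.card_biUnion_le (s := Finset.range (R+1)) (t := fun k => SS pos R k)
  calc ((TT pos R).card : ℝ) ≤ ((∑ k ∈ Finset.range (R+1), (SS pos R k).card : ℕ) : ℝ) := by
        exact_mod_cast h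
    _ = ∑ k ∈ Finset.range (R+1), ((SS pos R k).card : ℝ) := by push_cast; rfl
    _ ≤ ∑ _k ∈ Finset.range (R+1), x d ^ R * K₀ (γ := γ) d :=
        Finset.sum_le_sum (fun k _ => card_SS_le pos d hd hpos R k)
    _ = (R + 1 : ℝ) * (x d ^ R * K₀ (γ := γ) d) := by
        rw [Finset.sum_const, Finset.card_range, nsmul_eq_mul]
        push_cast
        ring


end CountCodes

namespace RaagProof

variable {V : Type*} (Θ : SimpleGraph V)

open scoped commutatorElement in
lemma commute_of {v w : V} (h : Θ.Adj v w) :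
    Commute (PresentedGroup.of (rels := raagRels Θ) v) (PresentedGroup.of w) := by
  rw [← commutatorElement_eq_one_iff_commute]
  have h1 : (QuotientGroup.mk (FreeGroup.of v * FreeGroup.of w * (FreeGroup.of v)⁻¹ *
      (FreeGroup.of w)⁻¹) : PresentedGroup (raagRels Θ)) = 1 := by
    rw [QuotientGroup.eq_one_iff]
    exact Subgroup.subset_normalClosure ⟨v, w, h, rfl⟩
  have h2 : (⁅PresentedGroup.of (rels := raagRels Θ) v, PresentedGroup.of w⁆ : PresentedGroup (raagRels Θ))
      = (QuotientGroup.mk (FreeGroup.of v * FreeGroup.of w * (FreeGroup.of v)⁻¹ *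
        (FreeGroup.of w)⁻¹) : PresentedGroup (raagRels Θ)) := rfl
  exact h2.trans h1

/-- Letters: a vertex together with a sign. -/
abbrev L (V : Type*) := V × Bool

def ι (a : L V) : RAAG Θ :=
  if a.2 then PresentedGroup.of a.1 else (PresentedGroup.of a.1)⁻¹

/-- Two letters "depend" (fail to commute a priori) iff same vertex or non-adjacent. -/
def dep (a b : L V) : Prop := a.1 = b.1 ∨ ¬ Θ.Adj a.1 b.1

lemma dep_comm {a b : L V} : dep Θ a b ↔ dep Θ b a := by
  unfold dep
  constructor <;> rintro (h | h)
  · exact Or.inl h.symm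
  · exact Or.inr fun h' => h h'.symm
  · exact Or.inl h.symm
  · exact Or.inr fun h' => h h'.symm

lemma dep_refl (a : L V) : dep Θ a a := Or.inl rfl

lemma commute_ι {a b : L V} (h : ¬ dep Θ a b) : Commute (ι Θ a) (ι Θ b) := by
  unfold dep at h
  push_neg at h
  have hc : Commute (PresentedGroup.of (rels := raagRels Θ) a.1) (PresentedGroup.of b.1) :=
    commute_of Θ h.2
  unfold ι
  rcases a.2 <;> rcases b.2 <;> simp only [if_true, if_false, Bool.false_eq_true] <;>
    first
      | exact hc
      | exact hc.inv_left
      | exact hc.inv_right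
      | exact hc.inv_left.inv_right

namespace B2
section Blocks
variable {α : Type*} {M : Type*} [Monoid M] (dep : α → α → Prop)

def depSome (a : α) (C : List α) : Prop := ∃ b ∈ C, dep a b

def insL (a : α) : List (List α) → List (List α)
  | [] => [[a]]
  | C :: rest =>
    if depSome dep a C then [a] :: C :: rest
    else
      match rest with
      | [] => [(a :: C)]
      | C' :: rest' =>
        if depSome dep a C' then (a :: C) :: C' :: rest'
        else C :: insL a (C' :: rest')

variable {dep}

@[simp] lemma insL_nil (a : α) : insL dep a [] = [[a]] := by rw [insL]

lemma insL_pos {a : α} {C : List α} (rest : List (List α)) (h : depSome dep a C) :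
    insL dep a (C :: rest) = [a] :: C :: rest := by
  rw [insL.eq_def]; simp [h]

lemma insL_single {a : α} {C : List α} (h : ¬ depSome dep a C) :
    insL dep a [C] = [a :: C] := by
  rw [insL.eq_def]; simp [h]

lemma insL_two_pos {a : α} {C C' : List α} (rest' : List (List α))
    (h : ¬ depSome dep a C) (h' : depSome dep a C') :
    insL dep a (C :: C' :: rest') = (a :: C) :: C' :: rest' := by
  rw [insL.eq_def]; simp [h, h']

lemma insL_two_neg {a : α} {C C' : List α} (rest' : List (List α))
    (h : ¬ depSome dep a C) (h' : ¬ depSome dep a C') :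
    insL dep a (C :: C' :: rest') = C :: insL dep a (C' :: rest') := by
  rw [insL.eq_def]; simp [h, h']

lemma insL_length (a : α) (B : List (List α)) :
    ((insL dep a B).flatten).length = B.flatten.length + 1 := by
  induction B using insL.induct dep a with
  | case1 => simp
  | case2 C rest h => rw [insL_pos rest h]; simp
  | case3 C h => rw [insL_single h]; simp
  | case4 C h C' rest' h' => rw [insL_two_pos rest' h h']; simp
  | case5 C h C' rest' h' ih => rw [insL_two_neg rest' h h']; simp at ih ⊢; omega

variable (f : α → M)

def listProd (B : List (List α)) : M := (B.flatten.map f).prod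

lemma insL_prod (hcomm : ∀ a b, ¬ dep a b → Commute (f a) (f b))
    (a : α) (B : List (List α)) :
    listProd f (insL dep a B) = f a * listProd f B := by
  induction B using insL.induct dep a with
  | case1 => simp [listProd]
  | case2 C rest h => rw [insL_pos rest h]; simp [listProd]
  | case3 C h => rw [insL_single h]; simp [listProd]
  | case4 C h C' rest' h' => rw [insL_two_pos rest' h h']; simp [listProd, mul_assoc]
  | case5 C h C' rest' h' ih =>
      rw [insL_two_neg rest' h h']
      have hc : Commute (f a) ((C.map f).prod) := by
        apply Commute.list_prod_right
        intro y hy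
        simp only [List.mem_map] at hy
        obtain ⟨b, hb, rfl⟩ := hy
        exact (hcomm a b (fun hd => h ⟨b, hb, hd⟩))
      unfold listProd at ih ⊢
      simp only [List.flatten_cons, List.map_append, List.prod_append]
      rw [ih, ← mul_assoc, ← hc.eq, mul_assoc]
      simp [List.flatten_cons, List.map_append, List.prod_append, mul_assoc]

variable (dep) in
def blocksOK (B : List (List α)) : Prop :=
  ∀ C ∈ B, C ≠ [] ∧ C.Pairwise (fun u v => ¬ dep u v)

variable (dep) in
def chainOK (B : List (List α)) : Prop :=
  List.Chain' (fun C C' => ∀ u ∈ C, ∃ v ∈ C', dep u v) B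

lemma insL_head {a : α} {C' : List α} (rest' : List (List α)) (h : ¬ depSome dep a C') :
    ∃ h0 t, insL dep a (C' :: rest') = h0 :: t ∧ ∀ x ∈ C', x ∈ h0 := by
  match rest' with
  | [] => exact ⟨a :: C', [], insL_single h, fun x hx => List.mem_cons_of_mem _ hx⟩
  | C'' :: rest'' =>
    by_cases h'' : depSome dep a C''
    · exact ⟨a :: C', _, insL_two_pos _ h h'', fun x hx => List.mem_cons_of_mem _ hx⟩
    · exact ⟨C', _, insL_two_neg _ h h'', fun x hx => hx⟩

lemma insL_blocksOK {a : α} {B : List (List α)} (hB : blocksOK dep B) :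
    blocksOK dep (insL dep a B) := by
  induction B using insL.induct dep a with
  | case1 =>
      intro C hC; simp at hC; subst hC
      exact ⟨by simp, by simp⟩
  | case2 C rest h =>
      intro D hD
      rw [insL_pos rest h] at hD
      rcases List.mem_cons.1 hD with rfl | hD
      · exact ⟨by simp, by simp⟩
      · exact hB D hD
  | case3 C h =>
      intro D hD
      rw [insL_single h] at hD
      rcases List.mem_cons.1 hD with rfl | hD
      · refine ⟨by simp, List.pairwise_cons.2 ⟨fun b hb hd => h ⟨b, hb, hd⟩, (hB C (by simp)).2⟩⟩
      · simp at hD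
  | case4 C h C' rest' h' =>
      intro D hD
      rw [insL_two_pos rest' h h'] at hD
      rcases List.mem_cons.1 hD with rfl | hD
      · refine ⟨by simp, List.pairwise_cons.2 ⟨fun b hb hd => h ⟨b, hb, hd⟩, (hB C (by simp)).2⟩⟩
      · exact hB D (List.mem_cons_of_mem _ hD)
  | case5 C h C' rest' h' ih =>
      intro D hD
      rw [insL_two_neg rest' h h'] at hD
      rcases List.mem_cons.1 hD with rfl | hD
      · exact hB D (by simp)
      · exact ih (fun E hE => hB E (List.mem_cons_of_mem _ hE)) D hD

lemma insL_chainOK {a : α} {B : List (List α)} (hB : chainOK dep B) :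
    chainOK dep (insL dep a B) := by
  induction B using insL.induct dep a with
  | case1 => simp [chainOK, List.Chain']
  | case2 C rest h =>
      rw [chainOK, insL_pos rest h]
      refine List.IsChain.cons_cons ?_ hB
      intro u hu; simp at hu; subst hu; exact h
  | case3 C h => rw [chainOK, insL_single h]; simp [List.Chain']
  | case4 C h C' rest' h' =>
      rw [chainOK, insL_two_pos rest' h h']
      rw [chainOK] at hB
      rcases List.isChain_cons_cons.1 hB with ⟨hCC', hB'⟩
      refine List.isChain_cons_cons.2 ⟨?_, hB'⟩
      intro u hu
      rcases List.mem_cons.1 hu with rfl | hu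
      · exact h'
      · exact hCC' u hu
  | case5 C h C' rest' h' ih =>
      rw [chainOK, insL_two_neg rest' h h']
      rw [chainOK] at hB
      rcases List.isChain_cons_cons.1 hB with ⟨hCC', hB'⟩
      obtain ⟨h0, t, heq, hsub⟩ := insL_head rest' h'
      have ihh := ih hB'
      rw [chainOK, heq] at ihh
      rw [heq]
      refine List.isChain_cons_cons.2 ⟨?_, ihh⟩
      intro u hu
      obtain ⟨v, hv, hdep⟩ := hCC' u hu
      exact ⟨v, hsub v hv, hdep⟩

/-- Every word has a valid block decomposition with the same product and total length. -/
lemma exists_blocks (hcomm : ∀ a b, ¬ dep a b → Commute (f a) (f b)) (w : List α) :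
    ∃ B : List (List α), blocksOK dep B ∧ chainOK dep B ∧
      B.flatten.length = w.length ∧ listProd f B = (w.map f).prod := by
  induction w with
  | nil => exact ⟨[], by simp [blocksOK], by simp [chainOK, List.Chain'], by simp, by simp [listProd]⟩
  | cons a w ih =>
      obtain ⟨B, h1, h2, h3, h4⟩ := ih
      refine ⟨insL dep a B, insL_blocksOK h1, insL_chainOK h2, ?_, ?_⟩
      · rw [insL_length]; simp [h3]
      · rw [insL_prod f hcomm, h4]; simp


end Blocks
end B2

section Canon
variable [Fintype V]
open B2

def FProd (P : Finset (L V)) : RAAG Θ := (P.toList.map (ι Θ)).prod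

def seqP (S : List (Finset (L V))) : RAAG Θ := (S.map (FProd Θ)).prod

def cvChain (S : List (Finset (L V))) : Prop :=
  List.Chain' (fun P P' => ∀ u ∈ P, ∃ v ∈ P', dep Θ u v) S

lemma neq_of_not_dep {u v : L V} (h : ¬ dep Θ u v) : u ≠ v := by
  rintro rfl; exact h (dep_refl Θ u)

lemma nodup_of_block {C : List (L V)} (hC : C.Pairwise (fun u v => ¬ dep Θ u v)) :
    C.Nodup :=
  hC.imp (fun h => neq_of_not_dep Θ h)

lemma block_toFinset_prod {C : List (L V)} (hC : C.Pairwise (fun u v => ¬ dep Θ u v)) :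
    FProd Θ C.toFinset = (C.map (ι Θ)).prod := by
  have hn : C.Nodup := nodup_of_block Θ hC
  have hperm : (C.map (ι Θ)).Perm (C.toFinset.toList.map (ι Θ)) :=
    ((List.toFinset_toList hn).map (ι Θ)).symm
  have hcm : (C.map (ι Θ)).Pairwise Commute :=
    hC.map _ (fun {a b} h => commute_ι Θ h)
  exact (hperm.prod_eq' hcm).symm

lemma exists_word {R : ℕ} {g : RAAG Θ} (hg : g ∈ ball (raagGens Θ) R) :
    ∃ w : List (L V), w.length ≤ R ∧ (w.map (ι Θ)).prod = g := by
  obtain ⟨l, hlen, hmem, hprod⟩ := hg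
  suffices h : ∀ l : List (RAAG Θ), (∀ t ∈ l, t ∈ raagGens Θ ∪ (raagGens Θ)⁻¹) →
      ∃ w : List (L V), w.length = l.length ∧ w.map (ι Θ) = l by
    obtain ⟨w, hw1, hw2⟩ := h l hmem
    exact ⟨w, hw1 ▸ hlen, by rw [hw2, hprod]⟩
  intro l
  induction l with
  | nil => exact fun _ => ⟨[], rfl, rfl⟩
  | cons t l ih =>
      intro hmem'
      obtain ⟨w, hw1, hw2⟩ := ih (fun t ht => hmem' t (List.mem_cons_of_mem _ ht))
      rcases hmem' t (List.mem_cons_self) with ht | ht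
      · obtain ⟨v, rfl⟩ := ht
        exact ⟨(v, true) :: w, by simp [hw1], by simp [hw2, ι]⟩
      · rw [Set.mem_inv] at ht
        obtain ⟨v, hv⟩ := ht
        refine ⟨(v, false) :: w, by simp [hw1], ?_⟩
        have : t = (PresentedGroup.of (rels := raagRels Θ) v)⁻¹ := by
          rw [hv]; simp
        simp [this, hw2, ι]


lemma seqP_eq_listProd {B : List (List (L V))} (hB : blocksOK (dep Θ) B) :
    seqP Θ (B.map List.toFinset) = listProd (ι Θ) B := by
  rw [seqP, listProd, List.map_map]
  induction B with
  | nil => simp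
  | cons C B ihB =>
      simp only [List.map_cons, List.prod_cons, List.flatten_cons, List.map_append,
        List.prod_append]
      rw [ihB (fun C' hC' => hB C' (List.mem_cons_of_mem _ hC'))]
      rw [Function.comp_apply, block_toFinset_prod Θ (hB C (List.mem_cons_self)).2]

lemma exists_cvalid {R : ℕ} {g : RAAG Θ} (hg : g ∈ ball (raagGens Θ) R) :
    ∃ S : List (Finset (L V)), (∀ P ∈ S, P.Nonempty) ∧ cvChain Θ S ∧
      (S.map Finset.card).sum ≤ R ∧ seqP Θ S = g := by
  obtain ⟨w, hwlen, hwprod⟩ := exists_word Θ hg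
  obtain ⟨B, hBblocks, hBchain, hBlen, hBprod⟩ :=
    exists_blocks (dep := dep Θ) (ι Θ) (fun a b h => commute_ι Θ h) w
  refine ⟨B.map List.toFinset, ?_, ?_, ?_, ?_⟩
  · intro P hP
    obtain ⟨C, hC, rfl⟩ := List.mem_map.1 hP
    obtain ⟨x, hx⟩ := List.exists_mem_of_ne_nil C (hBblocks C hC).1
    exact ⟨x, List.mem_toFinset.2 hx⟩
  · rw [cvChain]; unfold List.Chain'; rw [List.isChain_map]
    refine hBchain.imp ?_
    intro C C' h u hu
    obtain ⟨v, hv, hdep⟩ := h u (List.mem_toFinset.1 hu)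
    exact ⟨v, List.mem_toFinset.2 hv, hdep⟩
  · calc ((B.map List.toFinset).map Finset.card).sum
        = (B.map List.length).sum := by
          rw [List.map_map]
          refine congrArg List.sum (List.map_congr_left ?_)
          intro C hC
          exact List.toFinset_card_of_nodup (nodup_of_block Θ (hBblocks C hC).2)
      _ = B.flatten.length := List.length_flatten.symm
      _ ≤ R := hBlen ▸ hwlen
  · rw [seqP_eq_listProd Θ hBblocks, hBprod, hwprod]
end Canon

section Decode
variable [Fintype V] [Nonempty V] (c₀ : ℕ)

/-- The code alphabet. -/
abbrev CA (V : Type*) [Fintype V] (c₀ : ℕ) : Type _ :=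
  Fin (Fintype.card (L V)) × Fin (c₀ + 1) × Bool

/-- A junk letter. -/
def dflt : L V := (Classical.arbitrary V, true)

/-- Closed non-neighborhood of a vertex. -/
def clN (v : V) : Finset V := insert v ((Θᶜ).neighborFinset v)

lemma mem_clN_of_dep {u p : L V} (h : dep Θ u p) : u.1 ∈ clN Θ p.1 := by
  rcases h with h | h
  · exact h ▸ Finset.mem_insert_self _ _
  · by_cases he : u.1 = p.1
    · exact he ▸ Finset.mem_insert_self _ _
    · refine Finset.mem_insert_of_mem ?_
      rw [SimpleGraph.mem_neighborFinset]
      exact ⟨fun hh => he hh.symm, fun hh => h hh.symm⟩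

lemma card_clN (hdeg : ∀ v : V, ((Θᶜ).neighborSet v).ncard ≤ c₀) (v : V) :
    (clN Θ v).card ≤ c₀ + 1 := by
  refine le_trans (Finset.card_insert_le _ _) ?_
  have : ((Θᶜ).neighborFinset v).card = ((Θᶜ).neighborSet v).ncard := by
    rw [SimpleGraph.neighborFinset_def, Set.ncard_eq_toFinset_card']
  have h2 := hdeg v
  omega

def decG (p : CA V c₀) : L V := (Fintype.equivFin (L V)).symm p.1

def decW (P : Finset (L V)) (p : CA V c₀) : L V :=
  ((clN Θ (P.toList.getD p.1 dflt).1).toList.getD p.2.1 (dflt (V := V)).1, p.2.2)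

def decodeAux : Finset (L V) → List (Finset (CA V c₀)) → List (Finset (L V))
  | _, [] => []
  | P, E :: r =>
      E.image (decW Θ c₀ P) :: decodeAux (E.image (decW Θ c₀ P)) r

def decode : List (Finset (CA V c₀)) → List (Finset (L V))
  | [] => []
  | E :: r => ((E.image (decG c₀)) :: decodeAux Θ c₀ (E.image (decG c₀)) r).reverse

/-- The element of the RAAG decoded from a code. -/
def F (w : List (Finset (CA V c₀))) : RAAG Θ := seqP Θ (decode Θ c₀ w)

/-- Good codes of size at most `R`. -/
def good (R : ℕ) (w : List (Finset (CA V c₀))) : Prop :=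
  List.Chain' (fun E E' => ∀ p ∈ E', (p.1 : ℕ) < E.card) w ∧
    (∀ E ∈ w, E.Nonempty) ∧ (w.map Finset.card).sum ≤ R

lemma encG_exists (C : Finset (L V)) :
    ∃ E : Finset (CA V c₀), E.image (decG c₀) = C ∧ E.card = C.card := by
  classical
  refine ⟨C.image (fun u => (Fintype.equivFin (L V) u, ⟨0, Nat.succ_pos _⟩, u.2)), ?_, ?_⟩
  · rw [Finset.image_image]
    have : ∀ u ∈ C, (decG c₀ ((Fintype.equivFin (L V)) u, (⟨0, Nat.succ_pos _⟩ : Fin (c₀+1)), u.2)) = u := by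
      intro u _; simp [decG]
    calc C.image _ = C.image id := Finset.image_congr (fun u hu => this u hu)
      _ = C := Finset.image_id
  · apply Finset.card_image_of_injOn
    intro u _ v _ huv
    have := congrArg (fun p => ((Fintype.equivFin (L V)).symm p.1 : L V)) huv
    simpa using this

lemma encW_exists (hdeg : ∀ v : V, ((Θᶜ).neighborSet v).ncard ≤ c₀)
    (P C : Finset (L V)) (hPC : ∀ u ∈ C, ∃ v ∈ P, dep Θ u v) :
    ∃ E : Finset (CA V c₀), E.image (decW Θ c₀ P) = C ∧ E.card = C.card ∧
      ∀ p ∈ E, (p.1 : ℕ) < P.card := by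
  classical
  -- encoding of a letter
  have henc : ∀ u ∈ C, ∃ p : CA V c₀, decW Θ c₀ P p = u ∧ (p.1 : ℕ) < P.card := by
    intro u hu
    obtain ⟨v, hv, hdep⟩ := hPC u hu
    set pr : L V → Bool := fun q => decide (dep Θ u q) with hpr
    have hex : ∃ x ∈ P.toList, pr x = true :=
      ⟨v, Finset.mem_toList.2 hv, by simp [hpr, hdep]⟩
    have hilt : P.toList.findIdx pr < P.toList.length := List.findIdx_lt_length_of_exists hex
    set i := P.toList.findIdx pr with hi
    have hwit : pr (P.toList[i]) = true := List.findIdx_getElem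
    set q : L V := P.toList[i] with hq
    have hdepq : dep Θ u q := by simpa [hpr] using hwit
    have hmem : u.1 ∈ (clN Θ q.1).toList := Finset.mem_toList.2 (mem_clN_of_dep Θ hdepq)
    have hjlt : (clN Θ q.1).toList.idxOf u.1 < (clN Θ q.1).toList.length :=
      List.idxOf_lt_length_iff.2 hmem
    set j := (clN Θ q.1).toList.idxOf u.1 with hj
    have hjc : j < c₀ + 1 := by
      have := card_clN Θ c₀ hdeg q.1
      rw [Finset.length_toList] at hjlt
      omega
    have hiP : i < P.card := by rwa [Finset.length_toList] at hilt
    have hicard : i < Fintype.card (L V) :=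
      lt_of_lt_of_le hiP (Finset.card_le_univ P)
    refine ⟨(⟨i, hicard⟩, ⟨j, hjc⟩, u.2), ?_, hiP⟩
    rw [decW]
    simp only
    rw [List.getD_eq_getElem _ _ hilt, ← hq]
    rw [List.getD_eq_getElem _ _ hjlt]
    have h4 : (clN Θ q.1).toList[j]'hjlt = u.1 := List.getElem_idxOf hjlt
    exact Prod.ext h4 rfl
  choose enc hencd hencp using henc
  refine ⟨C.attach.image (fun u => enc u.1 u.2), ?_, ?_, ?_⟩
  · rw [Finset.image_image]
    ext x
    simp only [Finset.mem_image, Finset.mem_attach, true_and, Subtype.exists,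
      Function.comp_apply]
    constructor
    · rintro ⟨u, hu, rfl⟩
      rw [hencd u hu]; exact hu
    · intro hx
      exact ⟨x, hx, hencd x hx⟩
  · rw [Finset.card_image_of_injOn, Finset.card_attach]
    intro u _ v _ huv
    have h5 : (u.1 : L V) = v.1 := by
      have h6 := congrArg (decW Θ c₀ P) huv
      simpa [hencd] using h6
    exact Subtype.ext h5
  · intro p hp
    obtain ⟨u, _, rfl⟩ := Finset.mem_image.1 hp
    exact hencp u.1 u.2

end Decode

section Cover
variable [Fintype V] [Nonempty V] (c₀ : ℕ)

lemma encAux_exists (hdeg : ∀ v : V, ((Θᶜ).neighborSet v).ncard ≤ c₀)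
    (T' : List (Finset (L V))) :
    ∀ P : Finset (L V),
      List.Chain' (fun X Y => ∀ u ∈ Y, ∃ v ∈ X, dep Θ u v) (P :: T') →
      (∀ X ∈ T', X.Nonempty) →
      ∃ ws : List (Finset (CA V c₀)),
        decodeAux Θ c₀ P ws = T' ∧
        (ws.map Finset.card).sum = (T'.map Finset.card).sum ∧
        List.Chain' (fun E E' => ∀ p ∈ E', (p.1 : ℕ) < E.card) ws ∧
        (∀ p ∈ ws.headD ∅, (p.1 : ℕ) < P.card) ∧
        (∀ E ∈ ws, E.Nonempty) := by
  induction T' with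
  | nil =>
      intro P _ _
      exact ⟨[], rfl, rfl, List.isChain_nil, by simp, by simp⟩
  | cons C T'' ih =>
      intro P hchain hne
      rcases List.isChain_cons_cons.1 hchain with ⟨hPC, hchain'⟩
      obtain ⟨E, hEim, hEcard, hEpos⟩ := encW_exists Θ c₀ hdeg P C hPC
      obtain ⟨ws', hd, hs, hc, hh, hn⟩ := ih C hchain'
        (fun X hX => hne X (List.mem_cons_of_mem _ hX))
      refine ⟨E :: ws', ?_, ?_, ?_, ?_, ?_⟩
      · rw [decodeAux, hEim, hd]
      · simp only [List.map_cons, List.sum_cons, hs, hEcard]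
      · unfold List.Chain'; rw [List.isChain_cons]
        refine ⟨?_, hc⟩
        intro Y hY p hp
        rw [hEcard]
        refine hh p ?_
        cases ws' with
        | nil => simp at hY
        | cons a t =>
            simp only [List.head?_cons, Option.mem_def, Option.some.injEq] at hY
            subst hY
            simpa using hp
      · intro p hp
        simp only [List.headD_cons] at hp
        exact hEpos p hp
      · intro X hX
        rcases List.mem_cons.1 hX with rfl | hX
        · rw [← Finset.card_pos, hEcard, Finset.card_pos]
          exact hne C (List.mem_cons_self)
        · exact hn X hX

lemma cover (hdeg : ∀ v : V, ((Θᶜ).neighborSet v).ncard ≤ c₀) {R : ℕ} {g : RAAG Θ}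
    (hg : g ∈ ball (raagGens Θ) R) :
    ∃ w : List (Finset (CA V c₀)), good (V := V) c₀ R w ∧ F Θ c₀ w = g := by
  obtain ⟨S, hSne, hSchain, hSsum, hSprod⟩ := exists_cvalid Θ hg
  rcases eq_or_ne S [] with rfl | hSnil
  · refine ⟨[], ⟨List.isChain_nil, by simp, by simp⟩, ?_⟩
    rw [F, decode]
    exact hSprod
  · have hrev : S.reverse ≠ [] := fun h => hSnil (by simpa using congrArg List.reverse h)
    obtain ⟨C0, T', hT⟩ := List.exists_cons_of_ne_nil hrev
    have hchainT : List.Chain' (fun X Y => ∀ u ∈ Y, ∃ v ∈ X, dep Θ u v) (C0 :: T') := by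
      rw [← hT]; unfold List.Chain'; rw [List.isChain_reverse]
      exact List.IsChain.imp (fun a b h => h) hSchain
    obtain ⟨E0, hE0im, hE0card⟩ := encG_exists c₀ C0
    obtain ⟨ws, hd, hs, hc, hh, hn⟩ := encAux_exists Θ c₀ hdeg T' C0 hchainT
      (fun X hX => hSne X (by rw [← List.mem_reverse, hT]; exact List.mem_cons_of_mem _ hX))
    refine ⟨E0 :: ws, ⟨?_, ?_, ?_⟩, ?_⟩
    · unfold List.Chain'; rw [List.isChain_cons]
      refine ⟨?_, hc⟩
      intro Y hY p hp
      rw [hE0card]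
      refine hh p ?_
      cases ws with
      | nil => simp at hY
      | cons a t =>
          simp only [List.head?_cons, Option.mem_def, Option.some.injEq] at hY
          subst hY
          simpa using hp
    · intro E hE
      rcases List.mem_cons.1 hE with rfl | hE
      · rw [← Finset.card_pos, hE0card, Finset.card_pos]
        exact hSne C0 (by rw [← List.mem_reverse, hT]; exact List.mem_cons_self)
      · exact hn E hE
    · have h1 : ((E0 :: ws).map Finset.card).sum = ((C0 :: T').map Finset.card).sum := by
        simp only [List.map_cons, List.sum_cons, hs, hE0card]
      have h2 : ((C0 :: T').map Finset.card).sum = (S.map Finset.card).sum := by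
        rw [← hT, List.map_reverse, List.sum_reverse]
      omega
    · rw [F, decode, hE0im, hd, ← hT, List.reverse_reverse]
      exact hSprod

end Cover

section Final
variable [Fintype V] [Nonempty V] (c₀ : ℕ)

lemma hpos0 (m : ℕ) :
    ((Finset.univ : Finset (CA V c₀)).filter (fun p => (p.1 : ℕ) < m)).card
      ≤ 2 * (c₀ + 1) * m := by
  classical
  have hle : ((Finset.univ : Finset (CA V c₀)).filter (fun p => (p.1 : ℕ) < m)).card ≤
      (Finset.range m ×ˢ (Finset.univ : Finset (Fin (c₀+1))) ×ˢ
        (Finset.univ : Finset Bool)).card := by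
    apply Finset.card_le_card_of_injOn (fun p => ((p.1 : ℕ), p.2.1, p.2.2))
    · intro p hp
      rw [Finset.mem_coe, Finset.mem_filter] at hp
      rw [Finset.mem_coe, Finset.mem_product]
      exact ⟨Finset.mem_range.2 hp.2, Finset.mem_product.2 ⟨Finset.mem_univ _, Finset.mem_univ _⟩⟩
    · intro p _ q _ h
      have h1 : (p.1 : ℕ) = (q.1 : ℕ) := congrArg Prod.fst h
      have h2 : p.2.1 = q.2.1 := congrArg (fun z => z.2.1) h
      have h3 : p.2.2 = q.2.2 := congrArg (fun z => z.2.2) h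
      exact Prod.ext (Fin.ext h1) (Prod.ext h2 h3)
  have hcard : (Finset.range m ×ˢ (Finset.univ : Finset (Fin (c₀+1))) ×ˢ
      (Finset.univ : Finset Bool)).card = m * ((c₀+1) * 2) := by
    rw [Finset.card_product, Finset.card_product, Finset.card_range,
      Finset.card_univ, Finset.card_univ, Fintype.card_fin, Fintype.card_bool]
  rw [hcard] at hle
  calc ((Finset.univ : Finset (CA V c₀)).filter (fun p => (p.1 : ℕ) < m)).card
      ≤ m * ((c₀+1) * 2) := hle
    _ = 2 * (c₀ + 1) * m := by ring

lemma ball_subset (hdeg : ∀ v : V, ((Θᶜ).neighborSet v).ncard ≤ c₀) (R : ℕ) :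
    ball (raagGens Θ) R ⊆
      ↑((CountCodes.TT (fun p : CA V c₀ => (p.1 : ℕ)) R).image (F Θ c₀)) := by
  intro g hg
  obtain ⟨w, hgood, hFw⟩ := cover Θ c₀ hdeg hg
  rw [Finset.coe_image]
  exact ⟨w, CountCodes.mem_TT _ hgood, hFw⟩

lemma ball_ncard_le (hdeg : ∀ v : V, ((Θᶜ).neighborSet v).ncard ≤ c₀) (R : ℕ) :
    (((ball (raagGens Θ) R).ncard : ℕ) : ℝ) ≤
      (R + 1 : ℝ) * (CountCodes.x (2*(c₀+1)) ^ R *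
        CountCodes.K₀ (γ := CA V c₀) (2*(c₀+1))) := by
  have hd : 1 ≤ 2*(c₀+1) := by omega
  have hsub := ball_subset Θ c₀ hdeg R
  have h1 : (ball (raagGens Θ) R).ncard ≤
      ((CountCodes.TT (fun p : CA V c₀ => (p.1 : ℕ)) R).image (F Θ c₀)).card := by
    calc (ball (raagGens Θ) R).ncard
        ≤ (↑((CountCodes.TT (fun p : CA V c₀ => (p.1 : ℕ)) R).image (F Θ c₀)) : Set (RAAG Θ)).ncard :=
          Set.ncard_le_ncard hsub (Finset.finite_toSet _)
      _ = ((CountCodes.TT (fun p : CA V c₀ => (p.1 : ℕ)) R).image (F Θ c₀)).card :=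
          Set.ncard_coe_finset _
  have h2 : ((CountCodes.TT (fun p : CA V c₀ => (p.1 : ℕ)) R).image (F Θ c₀)).card ≤
      (CountCodes.TT (fun p : CA V c₀ => (p.1 : ℕ)) R).card := Finset.card_image_le
  have h3 := CountCodes.card_TT_le (fun p : CA V c₀ => (p.1 : ℕ)) (2*(c₀+1)) hd
    (hpos0 c₀) R
  calc (((ball (raagGens Θ) R).ncard : ℕ) : ℝ)
      ≤ (((CountCodes.TT (fun p : CA V c₀ => (p.1 : ℕ)) R).card : ℕ) : ℝ) := by
        exact_mod_cast le_trans h1 h2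
    _ ≤ _ := h3

lemma one_mem_ball (R : ℕ) : (1 : RAAG Θ) ∈ ball (raagGens Θ) R :=
  ⟨[], by simp, by simp, List.prod_nil⟩

lemma ball_finite (hdeg : ∀ v : V, ((Θᶜ).neighborSet v).ncard ≤ c₀) (R : ℕ) :
    (ball (raagGens Θ) R).Finite :=
  Set.Finite.subset (Finset.finite_toSet _) (ball_subset Θ c₀ hdeg R)

open Filter Asymptotics in
lemma main_bound (hdeg : ∀ v : V, ((Θᶜ).neighborSet v).ncard ≤ c₀) :
    Filter.limsup
        (fun R : ℕ => Real.log ((ball (raagGens Θ) R).ncard) / R) Filter.atTop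
      ≤ Real.log (2 * (c₀ : ℝ) + 2) + 1 := by
  set d : ℕ := 2*(c₀+1) with hdd
  have hd : 1 ≤ d := by omega
  set xx : ℝ := CountCodes.x d with hxxd
  set K : ℝ := CountCodes.K₀ (γ := CA V c₀) d with hKd
  have hxx : 0 < xx := CountCodes.x_pos d hd
  have hK : 1 ≤ K := CountCodes.one_le_K₀ d hd
  have hlogxx : Real.log xx = Real.log (2 * (c₀ : ℝ) + 2) + 1 := by
    rw [hxxd, CountCodes.x, Real.log_mul _ (Real.exp_ne_zero 1), Real.log_exp]
    · congr 2
      push_cast [hdd]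
      ring
    · have : (0:ℝ) < (d:ℝ) := by exact_mod_cast Nat.lt_of_lt_of_le Nat.zero_lt_one hd
      linarith
  set u : ℕ → ℝ := fun R => Real.log ((ball (raagGens Θ) R).ncard) / R with hud
  set v : ℕ → ℝ := fun R => Real.log ((R:ℝ)+1) / R + Real.log K / R + Real.log xx with hvd
  have hncard : ∀ R : ℕ, 1 ≤ (ball (raagGens Θ) R).ncard := by
    intro R
    have := Set.ncard_pos (ball_finite Θ c₀ hdeg R)
    exact (this.2 ⟨1, one_mem_ball Θ R⟩)
  have hunn : ∀ R : ℕ, 0 ≤ u R := by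
    intro R
    apply div_nonneg _ (Nat.cast_nonneg R)
    apply Real.log_nonneg
    exact_mod_cast hncard R
  have huv : ∀ᶠ R in atTop, u R ≤ v R := by
    rw [eventually_atTop]
    refine ⟨1, fun R hR => ?_⟩
    have hR0 : (0:ℝ) < (R:ℝ) := by exact_mod_cast hR
    have hb := ball_ncard_le Θ c₀ hdeg R
    have hnpos : (0:ℝ) < ((ball (raagGens Θ) R).ncard : ℝ) := by
      exact_mod_cast hncard R
    have hlog : Real.log ((ball (raagGens Θ) R).ncard) ≤
        Real.log ((R + 1 : ℝ) * (xx ^ R * K)) := Real.log_le_log hnpos hb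
    have hexpand : Real.log ((R + 1 : ℝ) * (xx ^ R * K)) =
        Real.log ((R:ℝ)+1) + ((R:ℕ) * Real.log xx + Real.log K) := by
      rw [Real.log_mul (by linarith) (by positivity), Real.log_mul (by positivity)
        (by linarith), Real.log_pow]
    calc u R ≤ Real.log ((R + 1 : ℝ) * (xx ^ R * K)) / R := by
          rw [hud]
          exact (div_le_div_iff_of_pos_right hR0).2 hlog
      _ = v R := by
          rw [hexpand, hvd]
          field_simp
          ring
  have t2 : Tendsto (fun R : ℕ => Real.log K / R) atTop (nhds 0) :=
    tendsto_const_div_atTop_nhds_zero_nat _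
  have hcomp : Tendsto (fun R : ℕ => (R:ℝ)+1) atTop atTop :=
    tendsto_atTop_add_const_right _ 1 tendsto_natCast_atTop_atTop
  have hlo : (fun R : ℕ => Real.log ((R:ℝ)+1)) =o[atTop] (fun R : ℕ => (R:ℝ)+1) :=
    Real.isLittleO_log_id_atTop.comp_tendsto hcomp
  have hbig : (fun R : ℕ => (R:ℝ)+1) =O[atTop] (fun R : ℕ => (R:ℝ)) := by
    apply IsBigO.of_bound 2
    rw [eventually_atTop]
    refine ⟨1, fun R hR => ?_⟩
    have hR0 : (1:ℝ) ≤ (R:ℝ) := by exact_mod_cast hR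
    rw [Real.norm_eq_abs, Real.norm_eq_abs, abs_of_nonneg (by linarith),
      abs_of_nonneg (by linarith)]
    linarith
  have t1 : Tendsto (fun R : ℕ => Real.log ((R:ℝ)+1) / R) atTop (nhds 0) :=
    (hlo.trans_isBigO hbig).tendsto_div_nhds_zero
  have hvlim : Tendsto v atTop (nhds (0 + 0 + Real.log xx)) := by
    rw [hvd]
    exact ((t1.add t2).add tendsto_const_nhds)
  calc Filter.limsup u Filter.atTop ≤ Filter.limsup v Filter.atTop := by
        exact Filter.limsup_le_limsup huv
          (Filter.isCoboundedUnder_le_of_eventually_le atTop (x := 0)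
            (Filter.Eventually.of_forall hunn))
          hvlim.isBoundedUnder_le
    _ = 0 + 0 + Real.log xx := hvlim.limsup_eq
    _ = Real.log (2 * (c₀ : ℝ) + 2) + 1 := by rw [hlogxx]; ring

end Final

end RaagProof

/-- If every vertex of the complementary graph `Θᶜ` has degree at most `c₀`, then
the growth rate of `A(Θ)` relative to the standard generating set is at most
`log (2c₀ + 2) + 1`. -/
theorem raag_growth_le {V : Type*} [Fintype V] (Θ : SimpleGraph V) (c₀ : ℕ)
    (hdeg : ∀ v : V, ((Θᶜ).neighborSet v).ncard ≤ c₀) :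
    Filter.limsup
        (fun R : ℕ => Real.log ((ball (raagGens Θ) R).ncard) / R) Filter.atTop
      ≤ Real.log (2 * (c₀ : ℝ) + 2) + 1 := by
  by_cases hV : Nonempty V
  · exact RaagProof.main_bound Θ c₀ hdeg
  · have hball : ∀ R : ℕ, ball (raagGens Θ) R = {1} := by
      intro R
      ext g
      constructor
      · rintro ⟨l, _, hmem, rfl⟩
        cases l with
        | nil => simp
        | cons t l =>
            rcases hmem t (List.mem_cons_self) with ht | ht
            · obtain ⟨v, -⟩ := ht
              exact absurd ⟨v⟩ hV
            · rw [Set.mem_inv] at ht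
              obtain ⟨v, -⟩ := ht
              exact absurd ⟨v⟩ hV
      · rintro rfl
        exact ⟨[], by simp, by simp, List.prod_nil⟩
    have heq : (fun R : ℕ => Real.log ((ball (raagGens Θ) R).ncard) / R) =
        fun _ : ℕ => (0:ℝ) := by
      funext R
      rw [hball R, Set.ncard_singleton]
      simp
    rw [heq, Filter.limsup_const]
    have h1 : (0:ℝ) ≤ Real.log (2 * (c₀ : ℝ) + 2) := by
      apply Real.log_nonneg
      have : (0:ℝ) ≤ (c₀:ℝ) := Nat.cast_nonneg _
      linarith
    linarith
end
end

section
/- Let G be a group and S a finite generating set for G with 1 ∉ S, such that for every s ∈ S, the number of elements t ∈ S with st ≠ ts is at most c₀. Then the growth rate of G relative to S is at most log(2c₀ + 2) + 1; that is, limsup_{R→∞} (log #B_R(G, S))/R ≤ log(2c₀ + 2) + 1. -/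
section CF

variable {G : Type*} [Group G]

/-- Dependence relation: `a` and `b` do not commute, or are equal. -/
def Dep (a b : G) : Prop := a * b ≠ b * a ∨ a = b

lemma Dep.refl (a : G) : Dep a a := Or.inr rfl

lemma not_dep_comm {a b : G} (h : ¬ Dep a b) : a * b = b * a := by
  by_contra h'; exact h (Or.inl h')

lemma not_dep_ne {a b : G} (h : ¬ Dep a b) : a ≠ b := fun h' => h (Or.inr h')

/-- Cartier–Foata style normal forms: a list of blocks, each a nonempty finset of
pairwise commuting letters from `T`, such that every letter of a block depends on some
letter of the previous block (for the first block: on some letter of `P`). -/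
inductive CF (T : Finset G) : Finset G → List (Finset G) → Prop
  | nil (P : Finset G) : CF T P []
  | cons {P F : Finset G} {L : List (Finset G)}
      (hFT : F ⊆ T) (hne : F.Nonempty)
      (hcm : ∀ a ∈ F, ∀ b ∈ F, a * b = b * a)
      (hdep : ∀ b ∈ F, ∃ a ∈ P, Dep a b)
      (hL : CF T F L) : CF T P (F :: L)

open scoped Classical in
/-- Product of a block (1 if the commutation condition fails). -/
noncomputable def bprod (F : Finset G) : G :=
  if h : ∀ a ∈ F, ∀ b ∈ F, a * b = b * a then
    F.noncommProd id (fun x hx y hy _ => h x hx y hy) else 1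

/-- Product of a normal form. -/
noncomputable def lprod (L : List (Finset G)) : G := (L.map bprod).prod

/-- Total size of a normal form. -/
def lsize (L : List (Finset G)) : ℕ := (L.map Finset.card).sum

lemma lprod_nil : lprod ([] : List (Finset G)) = 1 := rfl

lemma lprod_cons (F : Finset G) (L : List (Finset G)) :
    lprod (F :: L) = bprod F * lprod L := by simp [lprod]

lemma lsize_cons (F : Finset G) (L : List (Finset G)) :
    lsize (F :: L) = F.card + lsize L := by simp [lsize]

lemma bprod_pos {F : Finset G} (h : ∀ a ∈ F, ∀ b ∈ F, a * b = b * a) :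
    bprod F = F.noncommProd id (fun x hx y hy _ => h x hx y hy) := by
  rw [bprod, dif_pos h]

lemma bprod_singleton (a : G) : bprod ({a} : Finset G) = a := by
  rw [bprod_pos (by
    intro x hx y hy
    simp only [Finset.mem_singleton] at hx hy
    subst hx; subst hy; rfl)]
  exact Finset.noncommProd_singleton _ _

lemma bprod_commute {F : Finset G} {a : G} (h : ∀ x ∈ F, x * a = a * x) :
    bprod F * a = a * bprod F := by
  rw [bprod]
  split
  · exact (Finset.noncommProd_commute _ _ _ _ fun x hx => (h x hx).symm).symm.eq
  · rw [one_mul, mul_one]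

lemma bprod_insert [DecidableEq G] {F : Finset G} {a : G} (ha : a ∉ F)
    (hc : ∀ x ∈ F, x * a = a * x)
    (hcm : ∀ x ∈ F, ∀ y ∈ F, x * y = y * x) :
    bprod (insert a F) = bprod F * a := by
  classical
  have hcm' : ∀ x ∈ insert a F, ∀ y ∈ insert a F, x * y = y * x := by
    intro x hx y hy
    rcases Finset.mem_insert.1 hx with rfl | hx'
    · rcases Finset.mem_insert.1 hy with rfl | hy'
      · rfl
      · exact (hc y hy').symm
    · rcases Finset.mem_insert.1 hy with rfl | hy'
      · exact hc x hx'
      · exact hcm x hx' y hy'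
  rw [bprod_pos hcm', bprod_pos hcm]
  exact Finset.noncommProd_insert_of_notMem' _ _ _ _ ha

lemma lprod_commute {L : List (Finset G)} {a : G}
    (h : ∀ F ∈ L, ∀ x ∈ F, x * a = a * x) :
    lprod L * a = a * lprod L := by
  induction L with
  | nil => simp [lprod]
  | cons F L ih =>
      rw [lprod_cons, mul_assoc, ih (fun F' hF' => h F' (List.mem_cons_of_mem _ hF')),
        ← mul_assoc, bprod_commute (h F (List.mem_cons_self)), mul_assoc]

lemma insert_pairwise_comm [DecidableEq G] {F : Finset G} {a : G}
    (hc : ∀ x ∈ F, x * a = a * x)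
    (hcm : ∀ x ∈ F, ∀ y ∈ F, x * y = y * x) :
    ∀ x ∈ insert a F, ∀ y ∈ insert a F, x * y = y * x := by
  intro x hx y hy
  rcases Finset.mem_insert.1 hx with rfl | hx'
  · rcases Finset.mem_insert.1 hy with rfl | hy'
    · rfl
    · exact (hc y hy').symm
  · rcases Finset.mem_insert.1 hy with rfl | hy'
    · exact hc x hx'
    · exact hcm x hx' y hy'

lemma CF.mono {T P P' : Finset G} {L : List (Finset G)} (h : CF T P L) (hPP : P ⊆ P') :
    CF T P' L := by
  cases h with
  | nil => exact CF.nil P'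
  | cons hFT hne hcm hdep hL =>
      exact CF.cons hFT hne hcm
        (fun b hb => let ⟨x, hx, hd⟩ := hdep b hb; ⟨x, hPP hx, hd⟩) hL

lemma CF.insert_letter [DecidableEq G] {T : Finset G} {a : G} (haT : a ∈ T) :
    ∀ {L : List (Finset G)} {P : Finset G}, CF T P L →
    ((∃ p ∈ P, Dep p a) ∨ ∃ F ∈ L, ∃ x ∈ F, Dep x a) →
    ∃ L', CF T P L' ∧ lsize L' = lsize L + 1 ∧ lprod L' = lprod L * a := by
  intro L
  induction L with
  | nil =>
      intro P h H
      obtain ⟨p, hp, hd⟩ := H.resolve_right (by simp)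
      refine ⟨[{a}], ?_, by simp [lsize], by simp [lprod, bprod_singleton]⟩
      refine CF.cons (Finset.singleton_subset_iff.2 haT) ⟨a, Finset.mem_singleton_self a⟩
        ?_ ?_ (CF.nil _)
      · intro x hx y hy
        simp only [Finset.mem_singleton] at hx hy
        subst hx; subst hy; rfl
      · intro b hb
        simp only [Finset.mem_singleton] at hb
        exact ⟨p, hp, hb ▸ hd⟩
  | cons F L ih =>
      intro P h H
      cases h with
      | cons hFT hne hcm hdep hL =>
      by_cases hA : ∃ F' ∈ L, ∃ x ∈ F', Dep x a
      · obtain ⟨L', hL', hs, hp⟩ := ih hL (Or.inr hA)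
        exact ⟨F :: L', CF.cons hFT hne hcm hdep hL',
          by simp [lsize_cons, hs, Nat.add_assoc],
          by rw [lprod_cons, lprod_cons, hp, mul_assoc]⟩
      · push_neg at hA
        have hA' : ∀ F' ∈ L, ∀ x ∈ F', ¬ Dep x a := fun F' hF' x hx => hA F' hF' x hx
        have hLa : lprod L * a = a * lprod L :=
          lprod_commute fun F' hF' x hx => not_dep_comm (hA' F' hF' x hx)
        by_cases hB : ∃ x ∈ F, Dep x a
        · obtain ⟨x₀, hx₀, hd₀⟩ := hB
          cases L with
          | nil =>
              refine ⟨[F, {a}], ?_, by simp [lsize], ?_⟩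
              · refine CF.cons hFT hne hcm hdep
                  (CF.cons (Finset.singleton_subset_iff.2 haT)
                    ⟨a, Finset.mem_singleton_self a⟩ ?_ ?_ (CF.nil _))
                · intro x hx y hy
                  simp only [Finset.mem_singleton] at hx hy
                  subst hx; subst hy; rfl
                · intro b hb
                  simp only [Finset.mem_singleton] at hb
                  exact ⟨x₀, hx₀, hb ▸ hd₀⟩
              · simp [lprod, bprod_singleton, mul_assoc]
          | cons F₂ L₃ =>
              cases hL with
              | cons hF₂T hne₂ hcm₂ hdep₂ hL₃ =>
              have hmem₂ : F₂ ∈ F₂ :: L₃ := List.mem_cons_self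
              have haF₂ : a ∉ F₂ := fun h => hA' F₂ hmem₂ a h (Dep.refl a)
              have hcF₂ : ∀ x ∈ F₂, x * a = a * x :=
                fun x hx => not_dep_comm (hA' F₂ hmem₂ x hx)
              have hL₃a : lprod L₃ * a = a * lprod L₃ :=
                lprod_commute fun F' hF' x hx =>
                  not_dep_comm (hA' F' (List.mem_cons_of_mem _ hF') x hx)
              refine ⟨F :: insert a F₂ :: L₃, ?_, ?_, ?_⟩
              · refine CF.cons hFT hne hcm hdep
                  (CF.cons (Finset.insert_subset haT hF₂T)
                    (Finset.insert_nonempty _ _)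
                    (insert_pairwise_comm hcF₂ hcm₂) ?_
                    (hL₃.mono (Finset.subset_insert a F₂)))
                intro b hb
                rcases Finset.mem_insert.1 hb with rfl | hb'
                · exact ⟨x₀, hx₀, hd₀⟩
                · exact hdep₂ b hb'
              · simp [lsize, Finset.card_insert_of_notMem haF₂]
                omega
              · rw [lprod_cons, lprod_cons, lprod_cons, lprod_cons,
                  bprod_insert haF₂ hcF₂ hcm₂, mul_assoc (bprod F₂) a, ← hL₃a]
                group
        · have hPa : ∃ p ∈ P, Dep p a := by
            refine H.resolve_right ?_
            rintro ⟨F', hF', x, hx, hd⟩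
            rcases List.mem_cons.1 hF' with rfl | hF''
            · exact hB ⟨x, hx, hd⟩
            · exact hA' F' hF'' x hx hd
          have haF : a ∉ F := fun h => hB ⟨a, h, Dep.refl a⟩
          have hcF : ∀ x ∈ F, x * a = a * x :=
            fun x hx => not_dep_comm fun d => hB ⟨x, hx, d⟩
          obtain ⟨p, hp, hd⟩ := hPa
          refine ⟨insert a F :: L, ?_, ?_, ?_⟩
          · refine CF.cons (Finset.insert_subset haT hFT) (Finset.insert_nonempty _ _)
              (insert_pairwise_comm hcF hcm) ?_ (hL.mono (Finset.subset_insert a F))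
            intro b hb
            rcases Finset.mem_insert.1 hb with rfl | hb'
            · exact ⟨p, hp, hd⟩
            · exact hdep b hb'
          · simp [lsize, Finset.card_insert_of_notMem haF]
            omega
          · rw [lprod_cons, lprod_cons, bprod_insert haF hcF hcm, mul_assoc, ← hLa]
            group

lemma exists_cf [DecidableEq G] (T : Finset G) :
    ∀ w : List G, (∀ t ∈ w, t ∈ T) →
      ∃ L, CF T T L ∧ lsize L = w.length ∧ lprod L = w.prod := by
  intro w
  induction w using List.reverseRecOn with
  | nil => exact fun _ => ⟨[], CF.nil T, rfl, rfl⟩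
  | append_singleton w a ih =>
      intro hw
      obtain ⟨L, hL, hs, hp⟩ := ih fun t ht => hw t (List.mem_append_left _ ht)
      have haT : a ∈ T := hw a (by simp)
      obtain ⟨L', h1, h2, h3⟩ := CF.insert_letter haT hL (Or.inl ⟨a, haT, Dep.refl a⟩)
      exact ⟨L', h1, by simp [h2, hs], by simp [h3, hp]⟩

instance depDecidable [DecidableEq G] (a b : G) : Decidable (Dep a b) :=
  inferInstanceAs (Decidable (a * b ≠ b * a ∨ a = b))

lemma ncard_biUnion_le {α β : Type*} (C : Finset β) (g : β → Set α) :
    (⋃ b ∈ C, g b).ncard ≤ ∑ b ∈ C, (g b).ncard := by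
  classical
  induction C using Finset.induction with
  | empty => simp
  | insert _ _ hb ih =>
      rw [Finset.sum_insert hb, Finset.set_biUnion_insert]
      exact (Set.ncard_union_le _ _).trans (by gcongr)

lemma NF_count [DecidableEq G] (T : Finset G) (D : ℕ) (hD : 1 ≤ D)
    (hdeg : ∀ a ∈ T, (T.filter fun b => Dep a b).card ≤ D) :
    ∀ n (P : Finset G), P ⊆ T →
      {L | CF T P L ∧ lsize L ≤ n}.Finite ∧
      ({L | CF T P L ∧ lsize L ≤ n}.ncard : ℝ) ≤
        ((D : ℝ) * Real.exp 1) ^ n * Real.exp P.card := by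
  intro n
  induction n using Nat.strong_induction_on with
  | _ n ih =>
  intro P hPT
  have hDe1 : (1 : ℝ) ≤ (D : ℝ) * Real.exp 1 := by
    have h1 : (1 : ℝ) ≤ (D : ℝ) := by exact_mod_cast hD
    have h2 : (1 : ℝ) ≤ Real.exp 1 := by
      have := Real.add_one_le_exp (1 : ℝ); linarith
    nlinarith
  have hDe0 : (0 : ℝ) ≤ (D : ℝ) * Real.exp 1 := by linarith
  set N : Finset G := T.filter (fun b => ∃ a ∈ P, Dep a b) with hN
  have hNcard : N.card ≤ D * P.card := by
    have hsub : N ⊆ P.biUnion (fun a => T.filter fun b => Dep a b) := by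
      intro b hb
      rw [hN, Finset.mem_filter] at hb
      obtain ⟨hbT, a, haP, hd⟩ := hb
      exact Finset.mem_biUnion.2 ⟨a, haP, Finset.mem_filter.2 ⟨hbT, hd⟩⟩
    calc N.card ≤ (P.biUnion (fun a => T.filter fun b => Dep a b)).card :=
          Finset.card_le_card hsub
      _ ≤ ∑ a ∈ P, (T.filter fun b => Dep a b).card := Finset.card_biUnion_le
      _ ≤ ∑ _a ∈ P, D := Finset.sum_le_sum fun a ha => hdeg a (hPT ha)
      _ = P.card * D := by rw [Finset.sum_const, smul_eq_mul]
      _ = D * P.card := mul_comm _ _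
  set C : Finset (Finset G) := N.powerset.filter (fun F => F.Nonempty ∧ F.card ≤ n) with hC
  -- the tail sets
  have key : ∀ F ∈ C, {L | CF T F L ∧ lsize L ≤ n - F.card}.Finite ∧
      ({L | CF T F L ∧ lsize L ≤ n - F.card}.ncard : ℝ) ≤
        ((D : ℝ) * Real.exp 1) ^ (n - F.card) * Real.exp F.card := by
    intro F hF
    rw [hC, Finset.mem_filter, Finset.mem_powerset] at hF
    obtain ⟨hFN, hFne, hFn⟩ := hF
    have hcpos : 0 < F.card := Finset.card_pos.2 hFne
    exact ih (n - F.card) (Nat.sub_lt (lt_of_lt_of_le hcpos hFn) hcpos) F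
      (hFN.trans (Finset.filter_subset _ _))
  have hsub : {L | CF T P L ∧ lsize L ≤ n} ⊆
      insert [] (⋃ F ∈ C, (F :: ·) '' {L | CF T F L ∧ lsize L ≤ n - F.card}) := by
    rintro L ⟨hL, hsz⟩
    cases hL with
    | nil => exact Set.mem_insert _ _
    | @cons _ F L' hFT hne hcm hdep hL' =>
        refine Set.mem_insert_iff.2 (Or.inr ?_)
        rw [lsize_cons] at hsz
        have hFC : F ∈ C := by
          rw [hC, Finset.mem_filter, Finset.mem_powerset]
          refine ⟨?_, hne, le_trans (Nat.le_add_right _ _) hsz⟩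
          intro b hb
          rw [hN, Finset.mem_filter]
          exact ⟨hFT hb, hdep b hb⟩
        refine Set.mem_biUnion hFC ⟨L', ⟨hL', ?_⟩, rfl⟩
        omega
  have hfin : (insert ([] : List (Finset G))
      (⋃ F ∈ C, (F :: ·) '' {L | CF T F L ∧ lsize L ≤ n - F.card})).Finite :=
    Set.Finite.insert _ (Set.Finite.biUnion C.finite_toSet
      fun F hF => ((key F hF).1.image _))
  refine ⟨hfin.subset hsub, ?_⟩
  -- cardinality chain, natural number part
  have hnat : {L | CF T P L ∧ lsize L ≤ n}.ncard ≤
      1 + ∑ F ∈ C, {L | CF T F L ∧ lsize L ≤ n - F.card}.ncard := by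
    calc {L | CF T P L ∧ lsize L ≤ n}.ncard
        ≤ (insert ([] : List (Finset G))
            (⋃ F ∈ C, (F :: ·) '' {L | CF T F L ∧ lsize L ≤ n - F.card})).ncard :=
          Set.ncard_le_ncard hsub hfin
      _ ≤ (⋃ F ∈ C, (F :: ·) '' {L | CF T F L ∧ lsize L ≤ n - F.card}).ncard + 1 :=
          Set.ncard_insert_le _ _
      _ ≤ (∑ F ∈ C, ((F :: ·) '' {L | CF T F L ∧ lsize L ≤ n - F.card}).ncard) + 1 := by
          gcongr
          exact ncard_biUnion_le _ _
      _ ≤ (∑ F ∈ C, {L | CF T F L ∧ lsize L ≤ n - F.card}.ncard) + 1 :=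
          Nat.add_le_add_right
            (Finset.sum_le_sum fun F hF => Set.ncard_image_le (key F hF).1) 1
      _ = _ := by omega
  -- pass to the reals
  have hreal : ({L | CF T P L ∧ lsize L ≤ n}.ncard : ℝ) ≤
      1 + ∑ F ∈ C, ((D : ℝ) * Real.exp 1) ^ (n - F.card) * Real.exp F.card := by
    calc ({L | CF T P L ∧ lsize L ≤ n}.ncard : ℝ)
        ≤ ((1 + ∑ F ∈ C, {L | CF T F L ∧ lsize L ≤ n - F.card}.ncard : ℕ) : ℝ) := by
          exact_mod_cast hnat
      _ = 1 + ∑ F ∈ C, ({L | CF T F L ∧ lsize L ≤ n - F.card}.ncard : ℝ) := by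
          push_cast; ring
      _ ≤ 1 + ∑ F ∈ C, ((D : ℝ) * Real.exp 1) ^ (n - F.card) * Real.exp F.card := by
          gcongr with F hF
          exact (key F hF).2
  refine hreal.trans ?_
  -- now estimate the sum, grouping blocks by their cardinality
  have hgroup : ∑ F ∈ C, ((D : ℝ) * Real.exp 1) ^ (n - F.card) * Real.exp F.card =
      ∑ m ∈ C.image Finset.card, ((C.filter fun F => F.card = m).card : ℝ) *
        (((D : ℝ) * Real.exp 1) ^ (n - m) * Real.exp m) := by
    rw [Finset.sum_comp (fun m => ((D : ℝ) * Real.exp 1) ^ (n - m) * Real.exp m)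
      Finset.card]
    simp [nsmul_eq_mul]
  rw [hgroup]
  have hexp1 : (1 : ℝ) ≤ Real.exp 1 := by
    have := Real.add_one_le_exp (1 : ℝ); linarith
  set e1 := Real.exp 1 with he1
  set t := (D : ℝ) * e1 with ht
  have hf0 : ∀ m : ℕ, (0 : ℝ) ≤ t ^ (n - m) * Real.exp m :=
    fun m => mul_nonneg (pow_nonneg hDe0 _) (Real.exp_pos _).le
  have hcnt : ∀ m : ℕ, ((C.filter fun F => F.card = m).card : ℝ) ≤
      ((D * P.card).choose m : ℝ) := by
    intro m
    have h1 : C.filter (fun F => F.card = m) ⊆ N.powersetCard m := by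
      intro F hF
      rw [Finset.mem_filter] at hF
      obtain ⟨hFC, hFm⟩ := hF
      rw [hC, Finset.mem_filter, Finset.mem_powerset] at hFC
      exact Finset.mem_powersetCard.2 ⟨hFC.1, hFm⟩
    have h2 : (C.filter (fun F => F.card = m)).card ≤ N.card.choose m := by
      simpa [Finset.card_powersetCard] using Finset.card_le_card h1
    exact_mod_cast h2.trans (Nat.choose_le_choose m hNcard)
  have himg : C.image Finset.card ⊆ (Finset.range (n + 1)).erase 0 := by
    intro m hm
    obtain ⟨F, hF, rfl⟩ := Finset.mem_image.1 hm
    rw [hC, Finset.mem_filter] at hF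
    exact Finset.mem_erase.2 ⟨(Finset.card_pos.2 hF.2.1).ne',
      Finset.mem_range.2 (Nat.lt_succ_of_le hF.2.2)⟩
  have hterm : ∀ m ∈ Finset.range (n + 1),
      (((D * P.card).choose m : ℕ) : ℝ) * (t ^ (n - m) * Real.exp m) ≤
        t ^ n * ((P.card : ℝ) ^ m / (Nat.factorial m)) := by
    intro m hm
    rw [Finset.mem_range, Nat.lt_succ_iff] at hm
    have hch : (((D * P.card).choose m : ℕ) : ℝ) ≤
        ((D * P.card : ℕ) : ℝ) ^ m / (Nat.factorial m) := Nat.choose_le_pow_div m _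
    have hX : t ^ (n - m) * t ^ m = t ^ n := pow_sub_mul_pow t hm
    have hexpm : Real.exp (m : ℝ) = e1 ^ m := by
      rw [he1, ← Real.exp_nat_mul, mul_one]
    calc (((D * P.card).choose m : ℕ) : ℝ) * (t ^ (n - m) * Real.exp m)
        ≤ (((D * P.card : ℕ) : ℝ) ^ m / (Nat.factorial m)) * (t ^ (n - m) * Real.exp m) :=
          mul_le_mul_of_nonneg_right hch (hf0 m)
      _ = t ^ n * ((P.card : ℝ) ^ m / (Nat.factorial m)) := by
          rw [hexpm, ← hX, ht]
          push_cast
          ring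
  have hs1 : ∑ m ∈ C.image Finset.card,
        ((C.filter fun F => F.card = m).card : ℝ) * (t ^ (n - m) * Real.exp m) ≤
      ∑ m ∈ (Finset.range (n + 1)).erase 0,
        (((D * P.card).choose m : ℕ) : ℝ) * (t ^ (n - m) * Real.exp m) := by
    refine le_trans (Finset.sum_le_sum fun m _ =>
      mul_le_mul_of_nonneg_right (hcnt m) (hf0 m)) ?_
    exact Finset.sum_le_sum_of_subset_of_nonneg himg
      fun m _ _ => mul_nonneg (Nat.cast_nonneg _) (hf0 m)
  have h0mem : (0 : ℕ) ∈ Finset.range (n + 1) := Finset.mem_range.2 (Nat.succ_pos n)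
  calc 1 + ∑ m ∈ C.image Finset.card,
        ((C.filter fun F => F.card = m).card : ℝ) * (t ^ (n - m) * Real.exp m)
      ≤ t ^ n * ((P.card : ℝ) ^ 0 / (Nat.factorial 0)) +
        ∑ m ∈ (Finset.range (n + 1)).erase 0,
          t ^ n * ((P.card : ℝ) ^ m / (Nat.factorial m)) := by
        refine add_le_add ?_ (hs1.trans (Finset.sum_le_sum fun m hm =>
          hterm m (Finset.erase_subset _ _ hm)))
        simpa using one_le_pow₀ hDe1
    _ = ∑ m ∈ Finset.range (n + 1), t ^ n * ((P.card : ℝ) ^ m / (Nat.factorial m)) :=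
        Finset.add_sum_erase _ (fun m => t ^ n * ((P.card : ℝ) ^ m / (Nat.factorial m))) h0mem
    _ = t ^ n * ∑ m ∈ Finset.range (n + 1), (P.card : ℝ) ^ m / (Nat.factorial m) :=
        (Finset.mul_sum _ _ _).symm
    _ ≤ t ^ n * Real.exp P.card :=
        mul_le_mul_of_nonneg_left
          (Real.sum_le_exp_of_nonneg (Nat.cast_nonneg _) _) (pow_nonneg hDe0 n)

end CF

/-- If `S` is a finite generating set of `G` with `1 ∉ S` such that each `s ∈ S` fails to
commute with at most `c₀` elements of `S`, then the growth rate of `G` relative to `S`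
is at most `log (2c₀ + 2) + 1`. -/
theorem growth_le_of_commuting_gens {G : Type*} [Group G] (S : Set G) (c₀ : ℕ)
    (hfin : S.Finite) (hone : (1 : G) ∉ S)
    (hgen : Subgroup.closure S = ⊤)
    (hcomm : ∀ s ∈ S, {t ∈ S | s * t ≠ t * s}.ncard ≤ c₀) :
    Filter.limsup (fun R : ℕ => Real.log ((ball S R).ncard) / R) Filter.atTop
      ≤ Real.log (2 * (c₀ : ℝ) + 2) + 1 := by
  classical
  set X : ℝ := Real.log (2 * (c₀ : ℝ) + 2) + 1 with hX
  set T : Finset G := hfin.toFinset ∪ hfin.toFinset.image (·⁻¹) with hT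
  have hmemT : ∀ t : G, t ∈ T ↔ t ∈ S ∪ S⁻¹ := by
    intro t
    rw [hT]
    simp only [Finset.mem_union, Finset.mem_image, Set.Finite.mem_toFinset,
      Set.mem_union, Set.mem_inv]
    constructor
    · rintro (h | ⟨u, hu, rfl⟩)
      · exact Or.inl h
      · exact Or.inr (by simpa using hu)
    · rintro (h | h)
      · exact Or.inl h
      · exact Or.inr ⟨t⁻¹, h, inv_inv t⟩
  set D : ℕ := 2 * c₀ + 2 with hD
  have hDcast : (D : ℝ) = 2 * (c₀ : ℝ) + 2 := by rw [hD]; push_cast; ring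
  have hdeg : ∀ a ∈ T, (T.filter fun b => Dep a b).card ≤ D := by
    intro a haT
    have hs : ∃ s ∈ S, a = s ∨ a = s⁻¹ := by
      rcases (hmemT a).1 haT with h | h
      · exact ⟨a, h, Or.inl rfl⟩
      · exact ⟨a⁻¹, h, Or.inr (inv_inv a).symm⟩
    obtain ⟨s, hsS, hcase⟩ := hs
    set NC : Finset G := hfin.toFinset.filter (fun u => ¬(s * u = u * s)) with hNC
    have hNCc : NC.card ≤ c₀ := by
      have hset : {t ∈ S | s * t ≠ t * s} = ↑NC := by
        ext u
        simp [hNC, Set.Finite.mem_toFinset]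
      have h := hcomm s hsS
      rwa [hset, Set.ncard_coe_finset] at h
    have hsubf : T.filter (fun b => Dep a b) ⊆ insert a (NC ∪ NC.image (·⁻¹)) := by
      intro b hb
      rw [Finset.mem_filter] at hb
      obtain ⟨hbT, hdep⟩ := hb
      rcases hdep with hnc | rfl
      · have hsb : ¬(s * b = b * s) := by
          intro h
          have hcsb : Commute s b := h
          rcases hcase with rfl | rfl
          · exact hnc h
          · exact hnc hcsb.inv_left
        rcases (hmemT b).1 hbT with hbS | hbSi
        · exact Finset.mem_insert_of_mem (Finset.mem_union_left _
            (Finset.mem_filter.2 ⟨hfin.mem_toFinset.2 hbS, hsb⟩))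
        · have hbi : ¬(s * b⁻¹ = b⁻¹ * s) := by
            intro h
            have hcsb : Commute s b⁻¹ := h
            exact hsb (Commute.inv_right_iff.1 hcsb)
          refine Finset.mem_insert_of_mem (Finset.mem_union_right _
            (Finset.mem_image.2 ⟨b⁻¹, Finset.mem_filter.2
              ⟨hfin.mem_toFinset.2 hbSi, hbi⟩, inv_inv b⟩))
      · exact Finset.mem_insert_self _ _
    calc (T.filter fun b => Dep a b).card ≤ (insert a (NC ∪ NC.image (·⁻¹))).card :=
          Finset.card_le_card hsubf
      _ ≤ (NC ∪ NC.image (·⁻¹)).card + 1 := Finset.card_insert_le _ _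
      _ ≤ (NC.card + (NC.image (·⁻¹)).card) + 1 := by
          gcongr
          exact Finset.card_union_le _ _
      _ ≤ D := by
          have h := Finset.card_image_le (s := NC) (f := (·⁻¹))
          omega
  have hDe0 : (0 : ℝ) ≤ (D : ℝ) * Real.exp 1 :=
    mul_nonneg (Nat.cast_nonneg _) (Real.exp_pos _).le
  have hball : ∀ R : ℕ, (ball S R).Finite ∧
      ((ball S R).ncard : ℝ) ≤ ((D : ℝ) * Real.exp 1) ^ R * Real.exp T.card := by
    intro R
    obtain ⟨hfinNF, hcardNF⟩ := NF_count T D (by omega) hdeg R T (subset_refl T)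
    have hsub : ball S R ⊆ lprod '' {L | CF T T L ∧ lsize L ≤ R} := by
      rintro g ⟨l, hlen, hmem, rfl⟩
      obtain ⟨L, hL, hsz, hp⟩ := exists_cf T l (fun t ht => (hmemT t).2 (hmem t ht))
      exact ⟨L, ⟨hL, le_trans (le_of_eq hsz) hlen⟩, hp⟩
    refine ⟨(hfinNF.image _).subset hsub, ?_⟩
    calc ((ball S R).ncard : ℝ)
        ≤ ((lprod '' {L | CF T T L ∧ lsize L ≤ R}).ncard : ℝ) := by
          exact_mod_cast Set.ncard_le_ncard hsub (hfinNF.image _)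
      _ ≤ ({L | CF T T L ∧ lsize L ≤ R}.ncard : ℝ) := by
          exact_mod_cast Set.ncard_image_le hfinNF
      _ ≤ _ := hcardNF
  have hlog : ∀ R : ℕ, 1 ≤ R →
      Real.log ((ball S R).ncard) / R ≤ X + (T.card : ℝ) / R := by
    intro R hR
    have hfinB := (hball R).1
    have honeB : (1 : G) ∈ ball S R := ⟨[], by simp, by simp, rfl⟩
    have hpos : (0 : ℝ) < ((ball S R).ncard : ℝ) := by
      exact_mod_cast (Set.ncard_pos hfinB).2 ⟨1, honeB⟩
    have hDpos : (0 : ℝ) < (D : ℝ) := by rw [hDcast]; positivity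
    have hlogeq : Real.log (((D : ℝ) * Real.exp 1) ^ R * Real.exp T.card) =
        R * X + T.card := by
      rw [Real.log_mul (by positivity) (Real.exp_ne_zero _), Real.log_exp,
        Real.log_pow, Real.log_mul (ne_of_gt hDpos) (Real.exp_ne_zero _),
        Real.log_exp, hDcast, hX]
    have hlogle : Real.log ((ball S R).ncard) ≤ R * X + T.card :=
      (Real.log_le_log hpos (hball R).2).trans_eq hlogeq
    have hRpos : (0 : ℝ) < (R : ℝ) := by exact_mod_cast hR
    rw [div_le_iff₀ hRpos]
    have heq : (X + (T.card : ℝ) / R) * R = R * X + T.card := by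
      field_simp
    rw [heq]
    exact hlogle
  have hub : (fun R : ℕ => Real.log ((ball S R).ncard) / R) ≤ᶠ[Filter.atTop]
      (fun R : ℕ => X + (T.card : ℝ) / R) :=
    Filter.eventually_atTop.2 ⟨1, hlog⟩
  have htend : Filter.Tendsto (fun R : ℕ => X + (T.card : ℝ) / R) Filter.atTop
      (nhds (X + 0)) :=
    Filter.Tendsto.add tendsto_const_nhds (tendsto_const_div_atTop_nhds_zero_nat _)
  rw [add_zero] at htend
  have hcob : Filter.IsCoboundedUnder (· ≤ ·) Filter.atTop
      (fun R : ℕ => Real.log ((ball S R).ncard) / R) := by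
    refine Filter.isCoboundedUnder_le_of_le Filter.atTop (x := 0) fun R => ?_
    have honeB : (1 : G) ∈ ball S R := ⟨[], by simp, by simp, rfl⟩
    have h1 : (1 : ℝ) ≤ ((ball S R).ncard : ℝ) := by
      exact_mod_cast (Set.ncard_pos (hball R).1).2 ⟨1, honeB⟩
    exact div_nonneg (Real.log_nonneg h1) (Nat.cast_nonneg R)
  calc Filter.limsup (fun R : ℕ => Real.log ((ball S R).ncard) / R) Filter.atTop
      ≤ Filter.limsup (fun R : ℕ => X + (T.card : ℝ) / R) Filter.atTop :=
        Filter.limsup_le_limsup hub hcob htend.isBoundedUnder_le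
    _ = X := htend.limsup_eq
end

section
/- Let F_n be the free group on basis a_1, …, a_n with n ≥ 2, and let S ⊆ Aut(F_n) be the set of local Nielsen generators (inversions I_i for 1 ≤ i ≤ n, transpositions P_i and multiplications M_i for 1 ≤ i ≤ n−1). Then limsup_{R→∞} (log #B_R(Aut(F_n), S))/R ≤ log 16 + 1. -/
/-- The set of local Nielsen generators of `Aut(F_n)`: the inversions `I_i` for
`1 ≤ i ≤ n`, and the transpositions `P_i` and multiplications `M_i` for `1 ≤ i ≤ n-1`.
An automorphism of the free group is determined by its values on the basis, so each
generator is characterized by its action on the basis elements. -/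
def localNielsen (n : ℕ) : Set (MulAut (FreeGroup (Fin n))) :=
  {φ | -- inversions I_i
      (∃ i : Fin n, ∀ j : Fin n,
        φ (FreeGroup.of j) = if j = i then (FreeGroup.of j)⁻¹ else FreeGroup.of j)
    ∨ -- transpositions P_i
      (∃ i : Fin n, ∃ h : (i : ℕ) + 1 < n, ∀ j : Fin n,
        φ (FreeGroup.of j) =
          if j = i then FreeGroup.of ⟨(i : ℕ) + 1, h⟩
          else if j = ⟨(i : ℕ) + 1, h⟩ then FreeGroup.of i
          else FreeGroup.of j)
    ∨ -- multiplications M_i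
      (∃ i : Fin n, ∃ h : (i : ℕ) + 1 < n, ∀ j : Fin n,
        φ (FreeGroup.of j) =
          if j = i then FreeGroup.of i * FreeGroup.of ⟨(i : ℕ) + 1, h⟩
          else FreeGroup.of j)}


namespace AutGrowth

variable {n : ℕ}

def img (n : ℕ) (i : ℕ) (t : Fin 4) (j : Fin n) : FreeGroup (Fin n) :=
  if hi : i + 1 < n then
    if t = 0 then (if (j : ℕ) = i then (FreeGroup.of j)⁻¹ else FreeGroup.of j)
    else if t = 1 then
      (if (j : ℕ) = i then FreeGroup.of ⟨i+1, hi⟩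
       else if (j : ℕ) = i + 1 then FreeGroup.of ⟨i, by omega⟩ else FreeGroup.of j)
    else if t = 2 then
      (if (j : ℕ) = i then FreeGroup.of j * FreeGroup.of ⟨i+1, hi⟩ else FreeGroup.of j)
    else
      (if (j : ℕ) = i then FreeGroup.of j * (FreeGroup.of ⟨i+1, hi⟩)⁻¹ else FreeGroup.of j)
  else
    if t = 0 then (if (j : ℕ) = i then (FreeGroup.of j)⁻¹ else FreeGroup.of j)
    else FreeGroup.of j

def Descr (n : ℕ) (φ : MulAut (FreeGroup (Fin n))) (d : ℕ × Fin 4) : Prop :=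
  d.1 < n ∧ ∀ j : Fin n, φ (FreeGroup.of j) = img n d.1 d.2 j

lemma img_of_ne' {i : ℕ} {t : Fin 4} {j : Fin n} (h1 : (j : ℕ) ≠ i) (h2 : (j : ℕ) ≠ i + 1) :
    img n i t j = FreeGroup.of j := by
  unfold img; split_ifs <;> rfl



lemma aut_ext {φ ψ : MulAut (FreeGroup (Fin n))}
    (h : ∀ j : Fin n, φ (FreeGroup.of j) = ψ (FreeGroup.of j)) : φ = ψ := by
  have : φ.toMonoidHom = ψ.toMonoidHom := FreeGroup.ext_hom _ _ h
  ext x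
  exact congrArg (fun f => f.toFun x) this

lemma descr_unique {φ ψ : MulAut (FreeGroup (Fin n))} {d : ℕ × Fin 4}
    (h1 : Descr n φ d) (h2 : Descr n ψ d) : φ = ψ :=
  aut_ext fun j => by rw [h1.2 j, h2.2 j]

lemma fix_img {ψ : MulAut (FreeGroup (Fin n))} {i : ℕ} {t : Fin 4} {j : Fin n}
    (hfix : ∀ k : Fin n, ((k : ℕ) = i ∨ (k : ℕ) = i + 1) → ψ (FreeGroup.of k) = FreeGroup.of k)
    (hj : (j : ℕ) = i ∨ (j : ℕ) = i + 1) :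
    ψ (img n i t j) = img n i t j := by
  by_cases hi : i + 1 < n
  · have hi0 : i < n := by omega
    have e2 : ψ (FreeGroup.of (⟨i+1, hi⟩ : Fin n)) = FreeGroup.of (⟨i+1, hi⟩ : Fin n) :=
      hfix _ (Or.inr rfl)
    have e1 : ψ (FreeGroup.of (⟨i, hi0⟩ : Fin n)) = FreeGroup.of (⟨i, hi0⟩ : Fin n) :=
      hfix _ (Or.inl rfl)
    have ej : ψ (FreeGroup.of j) = FreeGroup.of j := hfix j hj
    simp only [img, dif_pos hi]
    split_ifs <;> simp [map_mul, map_inv, e1, e2, ej]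
  · simp only [img, dif_neg hi]
    split_ifs <;> simp [map_inv, hfix j hj]

lemma descr_comm {φ ψ : MulAut (FreeGroup (Fin n))} {i i' : ℕ} {s t : Fin 4}
    (hφ : Descr n φ (i, s)) (hψ : Descr n ψ (i', t)) (h : i + 2 ≤ i') :
    φ * ψ = ψ * φ := by
  have hφfix : ∀ k : Fin n, ((k : ℕ) = i' ∨ (k : ℕ) = i' + 1) →
      φ (FreeGroup.of k) = FreeGroup.of k := by
    intro k hk
    rw [hφ.2 k]
    exact img_of_ne' (by omega) (by omega)
  have hψfix : ∀ k : Fin n, ((k : ℕ) = i ∨ (k : ℕ) = i + 1) →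
      ψ (FreeGroup.of k) = FreeGroup.of k := by
    intro k hk
    rw [hψ.2 k]
    exact img_of_ne' (by omega) (by omega)
  apply aut_ext
  intro j
  show φ (ψ (FreeGroup.of j)) = ψ (φ (FreeGroup.of j))
  by_cases hj1 : (j : ℕ) = i ∨ (j : ℕ) = i + 1
  · rw [hψfix j hj1, hφ.2 j]
    exact (fix_img hψfix hj1).symm
  · push_neg at hj1
    by_cases hj2 : (j : ℕ) = i' ∨ (j : ℕ) = i' + 1
    · rw [hφfix j hj2, hψ.2 j]
      exact fix_img hφfix hj2
    · push_neg at hj2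
      have eψ : ψ (FreeGroup.of j) = FreeGroup.of j := by
        rw [hψ.2 j]; exact img_of_ne' hj2.1 hj2.2
      have eφ : φ (FreeGroup.of j) = FreeGroup.of j := by
        rw [hφ.2 j]; exact img_of_ne' hj1.1 hj1.2
      rw [eψ, eφ, eψ]

lemma descr_of_mem {φ : MulAut (FreeGroup (Fin n))} (h : φ ∈ localNielsen n) :
    ∃ d : ℕ × Fin 4, Descr n φ d := by
  rcases h with ⟨i, hi⟩ | ⟨i, hlt, hi⟩ | ⟨i, hlt, hi⟩
  · refine ⟨((i : ℕ), 0), i.isLt, fun j => ?_⟩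
    show φ (FreeGroup.of j) = img n (i : ℕ) 0 j
    rw [hi j]; clear hi
    unfold img
    by_cases hc : j = i
    · subst hc
      split_ifs <;> first | rfl | (exact absurd rfl (by assumption)) |
        (exact absurd (by assumption) (by assumption)) | simp_all
    · have hc' : (j : ℕ) ≠ (i : ℕ) := fun e => hc (Fin.ext e)
      split_ifs <;> first | rfl | (exact absurd (by assumption) hc) |
        (exact absurd (by assumption) hc') | simp_all
  · refine ⟨((i : ℕ), 1), i.isLt, fun j => ?_⟩
    show φ (FreeGroup.of j) = img n (i : ℕ) 1 j
    rw [hi j]; clear hi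
    simp only [img, dif_pos hlt]
    by_cases hc : j = i
    · subst hc; simp
    · have hc' : (j : ℕ) ≠ (i : ℕ) := fun e => hc (Fin.ext e)
      by_cases hc2 : j = (⟨(i : ℕ) + 1, hlt⟩ : Fin n)
      · subst hc2
        simp [hc, Fin.ext_iff]
      · have hc2' : (j : ℕ) ≠ (i : ℕ) + 1 := fun e => hc2 (Fin.ext e)
        simp [hc, hc2, hc', hc2']
  · refine ⟨((i : ℕ), 2), i.isLt, fun j => ?_⟩
    show φ (FreeGroup.of j) = img n (i : ℕ) 2 j
    rw [hi j]; clear hi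
    simp only [img, dif_pos hlt]
    by_cases hc : j = i
    · subst hc; simp
    · have hc' : (j : ℕ) ≠ (i : ℕ) := fun e => hc (Fin.ext e)
      simp [hc, hc']

lemma img_eval0 {i : ℕ} {j : Fin n} (hj : (j : ℕ) = i) :
    img n i 0 j = (FreeGroup.of j)⁻¹ := by
  unfold img; split_ifs <;> simp_all

lemma img_eval1a {i : ℕ} {j : Fin n} (hi1 : i + 1 < n) (hj : (j : ℕ) = i) :
    img n i 1 j = FreeGroup.of ⟨i+1, hi1⟩ := by
  unfold img; split_ifs <;> simp_all

lemma img_eval1b {i : ℕ} {j : Fin n} (hi1 : i + 1 < n) (hj : (j : ℕ) = i + 1) :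
    img n i 1 j = FreeGroup.of ⟨i, by omega⟩ := by
  unfold img; split_ifs <;> simp_all <;> omega

lemma img_eval2 {i : ℕ} {j : Fin n} (hi1 : i + 1 < n) (hj : (j : ℕ) = i) :
    img n i 2 j = FreeGroup.of j * FreeGroup.of ⟨i+1, hi1⟩ := by
  unfold img; split_ifs <;> simp_all

lemma img_eval3 {i : ℕ} {j : Fin n} (hi1 : i + 1 < n) (hj : (j : ℕ) = i) :
    img n i 3 j = FreeGroup.of j * (FreeGroup.of ⟨i+1, hi1⟩)⁻¹ := by
  unfold img; split_ifs <;> simp_all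

lemma img_not_lt {i : ℕ} {t : Fin 4} {j : Fin n} (hni : ¬ i + 1 < n) (ht : t ≠ 0) :
    img n i t j = FreeGroup.of j := by
  unfold img; split_ifs <;> simp_all

lemma fin4_cases (t : Fin 4) : t = 0 ∨ t = 1 ∨ t = 2 ∨ t = 3 := by
  rcases t with ⟨tv, htv⟩
  interval_cases tv <;> [exact Or.inl rfl; exact Or.inr (Or.inl rfl);
    exact Or.inr (Or.inr (Or.inl rfl)); exact Or.inr (Or.inr (Or.inr rfl))]

lemma img_eval0' {i : ℕ} {j : Fin n} (hj : (j : ℕ) ≠ i) :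
    img n i 0 j = FreeGroup.of j := by
  unfold img; split_ifs <;> simp_all

lemma img_eval2' {i : ℕ} {j : Fin n} (hj : (j : ℕ) ≠ i) :
    img n i 2 j = FreeGroup.of j := by
  unfold img; split_ifs <;> simp_all

lemma img_eval3' {i : ℕ} {j : Fin n} (hj : (j : ℕ) ≠ i) :
    img n i 3 j = FreeGroup.of j := by
  unfold img; split_ifs <;> simp_all

lemma descr_inv {φ : MulAut (FreeGroup (Fin n))} {i : ℕ} {t : Fin 4}
    (h : Descr n φ⁻¹ (i, t)) :
    Descr n φ (i, if t = 2 then 3 else if t = 3 then 2 else t) := by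
  obtain ⟨hin, hd0⟩ := h
  have hd : ∀ j : Fin n, φ⁻¹ (FreeGroup.of j) = img n i t j := hd0
  have key : ∀ x, φ (φ⁻¹ x) = x := fun x => by
    rw [MulAut.inv_def]; exact φ.apply_symm_apply x
  have hk : ∀ j : Fin n, φ (img n i t j) = FreeGroup.of j := fun j => by
    rw [← hd j]; exact key _
  clear hd0 hd key
  refine ⟨hin, fun j => ?_⟩
  by_cases hj1 : (j : ℕ) = i
  · by_cases hi1 : i + 1 < n
    · have hj1v : ((⟨i+1, hi1⟩ : Fin n) : ℕ) = i + 1 := rfl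
      rcases fin4_cases t with rfl | rfl | rfl | rfl
      · show φ (FreeGroup.of j) = img n i 0 j
        have h1 := hk j
        rw [img_eval0 hj1, map_inv] at h1
        rw [img_eval0 hj1]
        exact inv_eq_iff_eq_inv.mp h1
      · show φ (FreeGroup.of j) = img n i 1 j
        have h2 := hk (⟨i+1, hi1⟩ : Fin n)
        rw [img_eval1b hi1 hj1v] at h2
        have e : (⟨i, by omega⟩ : Fin n) = j := Fin.ext (by simp [hj1])
        rw [e] at h2
        rw [img_eval1a hi1 hj1]
        exact h2
      · show φ (FreeGroup.of j) = img n i 3 j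
        have h1 := hk j
        have h2 := hk (⟨i+1, hi1⟩ : Fin n)
        rw [img_eval2 hi1 hj1, map_mul] at h1
        rw [img_eval2' (by rw [hj1v]; omega)] at h2
        rw [h2] at h1
        rw [img_eval3 hi1 hj1]
        exact eq_mul_inv_iff_mul_eq.mpr h1
      · show φ (FreeGroup.of j) = img n i 2 j
        have h1 := hk j
        have h2 := hk (⟨i+1, hi1⟩ : Fin n)
        rw [img_eval3 hi1 hj1, map_mul, map_inv] at h1
        rw [img_eval3' (by rw [hj1v]; omega)] at h2
        rw [h2] at h1
        rw [img_eval2 hi1 hj1]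
        exact mul_inv_eq_iff_eq_mul.mp h1
    · rcases fin4_cases t with rfl | rfl | rfl | rfl
      · show φ (FreeGroup.of j) = img n i 0 j
        have h1 := hk j
        rw [img_eval0 hj1, map_inv] at h1
        rw [img_eval0 hj1]
        exact inv_eq_iff_eq_inv.mp h1
      · show φ (FreeGroup.of j) = img n i 1 j
        have h1 := hk j
        rw [img_not_lt hi1 (by decide)] at h1
        rw [img_not_lt hi1 (by decide)]
        exact h1
      · show φ (FreeGroup.of j) = img n i 3 j
        have h1 := hk j
        rw [img_not_lt hi1 (by decide)] at h1
        rw [img_not_lt hi1 (by decide)]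
        exact h1
      · show φ (FreeGroup.of j) = img n i 2 j
        have h1 := hk j
        rw [img_not_lt hi1 (by decide)] at h1
        rw [img_not_lt hi1 (by decide)]
        exact h1
  · by_cases hj2 : (j : ℕ) = i + 1
    · by_cases hi1 : i + 1 < n
      · have hj0v : ((⟨i, by omega⟩ : Fin n) : ℕ) = i := rfl
        rcases fin4_cases t with rfl | rfl | rfl | rfl
        · show φ (FreeGroup.of j) = img n i 0 j
          have h1 := hk j
          rw [img_eval0' hj1] at h1
          rw [img_eval0' hj1]
          exact h1
        · show φ (FreeGroup.of j) = img n i 1 j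
          have h2 := hk (⟨i, by omega⟩ : Fin n)
          rw [img_eval1a hi1 hj0v] at h2
          have e : (⟨i+1, hi1⟩ : Fin n) = j := Fin.ext (by simp [hj2])
          rw [e] at h2
          rw [img_eval1b hi1 hj2]
          exact h2
        · show φ (FreeGroup.of j) = img n i 3 j
          have h1 := hk j
          rw [img_eval2' hj1] at h1
          rw [img_eval3' hj1]
          exact h1
        · show φ (FreeGroup.of j) = img n i 2 j
          have h1 := hk j
          rw [img_eval3' hj1] at h1
          rw [img_eval2' hj1]
          exact h1
      · rcases fin4_cases t with rfl | rfl | rfl | rfl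
        · show φ (FreeGroup.of j) = img n i 0 j
          have h1 := hk j
          rw [img_eval0' hj1] at h1
          rw [img_eval0' hj1]
          exact h1
        · show φ (FreeGroup.of j) = img n i 1 j
          have h1 := hk j
          rw [img_not_lt hi1 (by decide)] at h1
          rw [img_not_lt hi1 (by decide)]
          exact h1
        · show φ (FreeGroup.of j) = img n i 3 j
          have h1 := hk j
          rw [img_not_lt hi1 (by decide)] at h1
          rw [img_not_lt hi1 (by decide)]
          exact h1
        · show φ (FreeGroup.of j) = img n i 2 j
          have h1 := hk j
          rw [img_not_lt hi1 (by decide)] at h1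
          rw [img_not_lt hi1 (by decide)]
          exact h1
    · have h1 := hk j
      rw [img_of_ne' hj1 hj2] at h1
      rcases fin4_cases t with rfl | rfl | rfl | rfl
      · show φ (FreeGroup.of j) = img n i 0 j
        rw [img_of_ne' hj1 hj2]; exact h1
      · show φ (FreeGroup.of j) = img n i 1 j
        rw [img_of_ne' hj1 hj2]; exact h1
      · show φ (FreeGroup.of j) = img n i 3 j
        rw [img_of_ne' hj1 hj2]; exact h1
      · show φ (FreeGroup.of j) = img n i 2 j
        rw [img_of_ne' hj1 hj2]; exact h1

/-! ### Sorting words into normal form -/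

def Ok (n : ℕ) (x : MulAut (FreeGroup (Fin n)) × (ℕ × Fin 4)) : Prop :=
  Descr n x.1 x.2

/-- insertion keeping the "position ≤ next position + 1" chain property -/
def ins (a : MulAut (FreeGroup (Fin n)) × (ℕ × Fin 4)) :
    List (MulAut (FreeGroup (Fin n)) × (ℕ × Fin 4)) →
    List (MulAut (FreeGroup (Fin n)) × (ℕ × Fin 4))
  | [] => [a]
  | b :: l => if b.2.1 + 2 ≤ a.2.1 then b :: ins a l else a :: b :: l

lemma ins_length (a : MulAut (FreeGroup (Fin n)) × (ℕ × Fin 4)) (l : List _) :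
    (ins a l).length = l.length + 1 := by
  induction l with
  | nil => rfl
  | cons b t ih =>
      unfold ins
      split_ifs <;> simp [ih]

lemma ins_mem {a x : MulAut (FreeGroup (Fin n)) × (ℕ × Fin 4)} {l : List _}
    (h : x ∈ ins a l) : x = a ∨ x ∈ l := by
  induction l with
  | nil => simpa [ins] using h
  | cons b t ih =>
      unfold ins at h
      split_ifs at h with hc
      · rcases List.mem_cons.mp h with h | h
        · exact Or.inr (List.mem_cons.mpr (Or.inl h))
        · rcases ih h with h | h
          · exact Or.inl h
          · exact Or.inr (List.mem_cons.mpr (Or.inr h))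
      · rcases List.mem_cons.mp h with h | h
        · exact Or.inl h
        · exact Or.inr h

lemma ins_prod {a : MulAut (FreeGroup (Fin n)) × (ℕ × Fin 4)} {l : List _}
    (ha : Ok n a) (hl : ∀ x ∈ l, Ok n x) :
    ((ins a l).map Prod.fst).prod = a.1 * (l.map Prod.fst).prod := by
  induction l with
  | nil => simp [ins]
  | cons b t ih =>
      unfold ins
      split_ifs with hc
      · have hb : Ok n b := hl b List.mem_cons_self
        have ht : ∀ x ∈ t, Ok n x := fun x hx => hl x (List.mem_cons.mpr (Or.inr hx))
        have hcomm : b.1 * a.1 = a.1 * b.1 := by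
          have h1 : Descr n b.1 (b.2.1, b.2.2) := hb
          have h2 : Descr n a.1 (a.2.1, a.2.2) := ha
          exact descr_comm h1 h2 hc
        simp only [List.map_cons, List.prod_cons, ih ht]
        rw [← mul_assoc, hcomm, mul_assoc]
      · simp

lemma ins_chain {a : MulAut (FreeGroup (Fin n)) × (ℕ × Fin 4)} {l : List _}
    (h : l.Chain' (fun x y => x.2.1 ≤ y.2.1 + 1)) :
    (ins a l).Chain' (fun x y => x.2.1 ≤ y.2.1 + 1) := by
  induction l with
  | nil => exact List.isChain_singleton a
  | cons b t ih =>
      unfold ins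
      split_ifs with hc
      · have ht : t.Chain' (fun x y => x.2.1 ≤ y.2.1 + 1) := h.tail
        have hit := ih ht
        unfold List.Chain'; rw [List.isChain_cons]
        refine ⟨?_, hit⟩
        intro y hy
        cases t with
        | nil =>
            simp [ins] at hy
            subst hy
            omega
        | cons c u =>
            unfold ins at hy
            split_ifs at hy with hc2
            · simp at hy
              subst hy
              have : b.2.1 ≤ c.2.1 + 1 := List.isChain_cons_cons.mp h |>.1
              omega
            · simp at hy
              subst hy
              omega
      · unfold List.Chain'; rw [List.isChain_cons]
        refine ⟨?_, h⟩
        intro y hy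
        simp at hy
        subst hy
        omega

lemma sort_list (l : List (MulAut (FreeGroup (Fin n)) × (ℕ × Fin 4)))
    (hl : ∀ x ∈ l, Ok n x) :
    ∃ l' : List (MulAut (FreeGroup (Fin n)) × (ℕ × Fin 4)),
      l'.length = l.length ∧ (∀ x ∈ l', Ok n x) ∧
      l'.Chain' (fun x y => x.2.1 ≤ y.2.1 + 1) ∧
      (l'.map Prod.fst).prod = (l.map Prod.fst).prod := by
  induction l with
  | nil => exact ⟨[], rfl, by simp, List.isChain_nil, rfl⟩
  | cons a t ih =>
      have ha : Ok n a := hl a List.mem_cons_self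
      have ht : ∀ x ∈ t, Ok n x := fun x hx => hl x (List.mem_cons.mpr (Or.inr hx))
      obtain ⟨t', hlen, hok, hch, hprod⟩ := ih ht
      refine ⟨ins a t', ?_, ?_, ins_chain hch, ?_⟩
      · rw [ins_length, hlen, List.length_cons]
      · intro x hx
        rcases ins_mem hx with rfl | hx
        · exact ha
        · exact hok x hx
      · rw [ins_prod ha hok, hprod]
        simp

lemma mem_T_descr {φ : MulAut (FreeGroup (Fin n))}
    (h : φ ∈ localNielsen n ∪ (localNielsen n)⁻¹) :
    ∃ d : ℕ × Fin 4, Descr n φ d := by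
  rcases h with h | h
  · exact descr_of_mem h
  · have h' : φ⁻¹ ∈ localNielsen n := h
    obtain ⟨⟨i, t⟩, hd⟩ := descr_of_mem h'
    exact ⟨_, descr_inv hd⟩

lemma lift_list (l : List (MulAut (FreeGroup (Fin n))))
    (hl : ∀ x ∈ l, x ∈ localNielsen n ∪ (localNielsen n)⁻¹) :
    ∃ L : List (MulAut (FreeGroup (Fin n)) × (ℕ × Fin 4)),
      L.map Prod.fst = l ∧ ∀ x ∈ L, Ok n x := by
  induction l with
  | nil => exact ⟨[], rfl, by simp⟩
  | cons a t ih =>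
      obtain ⟨L, hmap, hok⟩ := ih fun x hx => hl x (List.mem_cons.mpr (Or.inr hx))
      obtain ⟨d, hd⟩ := mem_T_descr (hl a List.mem_cons_self)
      refine ⟨(a, d) :: L, by simp [hmap], ?_⟩
      intro x hx
      rcases List.mem_cons.mp hx with rfl | hx
      · exact hd
      · exact hok x hx

/-! ### Counting -/

def GoodRep (n R : ℕ) (g : MulAut (FreeGroup (Fin n)))
    (L : List (MulAut (FreeGroup (Fin n)) × (ℕ × Fin 4))) : Prop :=
  L.length ≤ R ∧ (∀ x ∈ L, Ok n x) ∧ L.Chain' (fun x y => x.2.1 ≤ y.2.1 + 1) ∧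
    (L.map Prod.fst).prod = g

lemma exists_goodRep {n R : ℕ} {g : MulAut (FreeGroup (Fin n))}
    (hg : g ∈ ball (localNielsen n) R) : ∃ L, GoodRep n R g L := by
  obtain ⟨l, hlen, hmem, hprod⟩ := hg
  obtain ⟨L0, hmap, hok⟩ := lift_list l hmem
  obtain ⟨L, hl1, hl2, hl3, hl4⟩ := sort_list L0 hok
  refine ⟨L, ?_, hl2, hl3, ?_⟩
  · rw [hl1, ← (List.length_map Prod.fst : (L0.map Prod.fst).length = L0.length), hmap]; exact hlen
  · rw [hl4, hmap, hprod]

noncomputable def code (n R : ℕ) (L : List (MulAut (FreeGroup (Fin n)) × (ℕ × Fin 4))) :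
    Fin (R+1) × (Fin R → Fin 4) × Finset (Fin (n+2*R+1)) :=
  (⟨min L.length R, by omega⟩,
   fun k => if h : (k : ℕ) < L.length then (L.get ⟨k, h⟩).2.2 else 0,
   Finset.univ.image (fun k : Fin L.length =>
     (⟨min ((L.get k).2.1 + 2 * (k : ℕ)) (n + 2*R), by omega⟩ : Fin (n+2*R+1))))

lemma strictMono_aux {m : ℕ} {q : Fin m → ℕ}
    (h : ∀ k (hk : k + 1 < m), q ⟨k, Nat.lt_of_succ_lt hk⟩ < q ⟨k+1, hk⟩) : StrictMono q := by
  have key : ∀ (j : ℕ) (hj : j < m) (i : ℕ) (hi : i < j), q ⟨i, by omega⟩ < q ⟨j, hj⟩ := by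
    intro j
    induction j with
    | zero => intro _ i hi; omega
    | succ j ih =>
        intro hj i hi
        rcases Nat.lt_or_ge i j with hij | hij
        · exact (ih (by omega) i hij).trans (h j hj)
        · have hij' : i = j := by omega
          subst hij'
          exact h i hj
  intro a b hab
  have := key b.val b.isLt a.val hab
  simpa using this

lemma image_univ_comp_equiv {α β γ : Type*} [Fintype α] [Fintype β] [DecidableEq γ]
    (e : α ≃ β) (f : β → γ) :
    Finset.univ.image (fun a => f (e a)) = Finset.univ.image f := by
  ext x
  simp only [Finset.mem_image, Finset.mem_univ, true_and]
  constructor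
  · rintro ⟨a, ha⟩; exact ⟨e a, ha⟩
  · rintro ⟨b, hb⟩; exact ⟨e.symm b, by simpa using hb⟩

lemma code_inj {n R : ℕ} {g g' : MulAut (FreeGroup (Fin n))} {L L' : List _}
    (h : GoodRep n R g L) (h' : GoodRep n R g' L')
    (he : code n R L = code n R L') : g = g' := by
  obtain ⟨h1, h2, h3, h4⟩ := h
  obtain ⟨h1', h2', h3', h4'⟩ := h'
  have he1 : min L.length R = min L'.length R := congrArg Fin.val (congrArg Prod.fst he)
  have hlen : L.length = L'.length := by omega
  have he2 := congrArg (fun p => p.2.1) he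
  have he3 := congrArg (fun p => p.2.2) he
  simp only [code] at he2 he3
  -- position bounds
  have hpb : ∀ x ∈ L, x.2.1 < n := fun x hx => (h2 x hx).1
  have hpb' : ∀ x ∈ L', x.2.1 < n := fun x hx => (h2' x hx).1
  -- the q functions
  have hq1 : ∀ k : Fin L.length, (L.get k).2.1 + 2 * (k : ℕ) ≤ n + 2*R := by
    intro k
    have hm : L.get k ∈ L := by
      have := L.get_mem k
      simpa using this
    have := hpb _ hm
    have := k.isLt
    omega
  have hq1' : ∀ k : Fin L'.length, (L'.get k).2.1 + 2 * (k : ℕ) ≤ n + 2*R := by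
    intro k
    have hm : L'.get k ∈ L' := by
      have := L'.get_mem k
      simpa using this
    have := hpb' _ hm
    have := k.isLt
    omega
  set f₁ : Fin L.length → Fin (n+2*R+1) :=
    fun k => ⟨(L.get k).2.1 + 2 * (k : ℕ), by have := hq1 k; omega⟩ with hf₁
  set f₂ : Fin L'.length → Fin (n+2*R+1) :=
    fun k => ⟨(L'.get k).2.1 + 2 * (k : ℕ), by have := hq1' k; omega⟩ with hf₂
  have hmin1 : (fun k : Fin L.length =>
      (⟨min ((L.get k).2.1 + 2 * (k : ℕ)) (n + 2*R), by omega⟩ : Fin (n+2*R+1))) = f₁ := by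
    funext k
    simp only [hf₁]
    congr 1
    exact min_eq_left (hq1 k)
  have hmin2 : (fun k : Fin L'.length =>
      (⟨min ((L'.get k).2.1 + 2 * (k : ℕ)) (n + 2*R), by omega⟩ : Fin (n+2*R+1))) = f₂ := by
    funext k
    simp only [hf₂]
    congr 1
    exact min_eq_left (hq1' k)
  rw [hmin1, hmin2] at he3
  -- strict monotonicity
  have hs1 : StrictMono f₁ := by
    intro a b hab
    have : (f₁ a : ℕ) < (f₁ b : ℕ) := by
      refine strictMono_aux (q := fun k => ((f₁ k : ℕ))) ?_ hab
      intro k hk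
      have hchain := List.isChain_iff_getElem.mp h3 k (by omega)
      simp only [hf₁, List.get_eq_getElem]
      omega
    exact this
  have hs2 : StrictMono f₂ := by
    intro a b hab
    have : (f₂ a : ℕ) < (f₂ b : ℕ) := by
      refine strictMono_aux (q := fun k => ((f₂ k : ℕ))) ?_ hab
      intro k hk
      have hchain := List.isChain_iff_getElem.mp h3' k (by omega)
      simp only [hf₂, List.get_eq_getElem]
      omega
    exact this
  -- reindex f₂ by the cast equivalence
  have hs2' : StrictMono (fun k : Fin L.length => f₂ (finCongr hlen k)) := by
    intro a b hab
    exact hs2 (by simpa using hab)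
  have hre : Finset.univ.image (fun k : Fin L.length => f₂ (finCongr hlen k)) =
      Finset.univ.image f₂ := image_univ_comp_equiv (finCongr hlen) f₂
  have hrange : Set.range f₁ = Set.range (fun k : Fin L.length => f₂ (finCongr hlen k)) := by
    have c1 : (↑(Finset.univ.image f₁) : Set (Fin (n+2*R+1))) = Set.range f₁ := by
      rw [Finset.coe_image, Finset.coe_univ, Set.image_univ]
    have c2 : (↑(Finset.univ.image (fun k : Fin L.length => f₂ (finCongr hlen k))) :
        Set (Fin (n+2*R+1))) = Set.range (fun k : Fin L.length => f₂ (finCongr hlen k)) := by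
      rw [Finset.coe_image, Finset.coe_univ, Set.image_univ]
    rw [← c1, ← c2, hre, he3]
  have hfeq : f₁ = fun k : Fin L.length => f₂ (finCongr hlen k) := by
    haveI : WellFoundedLT (Fin L.length) := Finite.to_wellFoundedLT
    exact (hs1.range_inj hs2').mp hrange
  -- conclude the lists are equal
  have hLeq : L = L' := by
    apply List.ext_get hlen
    intro k hk hk'
    have hpos : (L.get ⟨k, hk⟩).2.1 = (L'.get ⟨k, hk'⟩).2.1 := by
      have h5 := congrFun hfeq ⟨k, hk⟩
      have h6 : (L.get ⟨k, hk⟩).2.1 + 2 * k = (L'.get ⟨k, hk'⟩).2.1 + 2 * k := by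
        simpa [hf₁, hf₂, Fin.ext_iff, finCongr_apply, Fin.cast_mk] using h5
      omega
    have htyp : (L.get ⟨k, hk⟩).2.2 = (L'.get ⟨k, hk'⟩).2.2 := by
      have := congrFun he2 ⟨k, by omega⟩
      simp only at this
      rw [dif_pos (show (k : ℕ) < L.length from hk), dif_pos (show (k : ℕ) < L'.length from hk')]
        at this
      exact this
    have hd : (L.get ⟨k, hk⟩).2 = (L'.get ⟨k, hk'⟩).2 := Prod.ext hpos htyp
    have hfst : (L.get ⟨k, hk⟩).1 = (L'.get ⟨k, hk'⟩).1 := by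
      have d1 : Descr n (L.get ⟨k, hk⟩).1 (L.get ⟨k, hk⟩).2 := h2 _ (L.get_mem ⟨k, hk⟩)
      have d2 : Descr n (L'.get ⟨k, hk'⟩).1 (L'.get ⟨k, hk'⟩).2 := h2' _ (L'.get_mem ⟨k, hk'⟩)
      rw [hd] at d1
      exact descr_unique d1 d2
    exact Prod.ext hfst hd
  rw [← h4, ← h4', hLeq]

lemma ball_ncard_le (n R : ℕ) :
    (ball (localNielsen n) R).ncard ≤ (R+1) * (4^R * 2^(n+2*R+1)) := by
  classical
  have key : (ball (localNielsen n) R).ncard ≤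
      (Set.univ : Set (Fin (R+1) × (Fin R → Fin 4) × Finset (Fin (n+2*R+1)))).ncard := by
    refine Set.ncard_le_ncard_of_injOn
      (fun g => if hg : ∃ L, GoodRep n R g L then code n R (Classical.choose hg) else default)
      (fun a _ => Set.mem_univ _) ?_ Set.finite_univ
    intro g hg g' hg' heq
    have e1 : ∃ L, GoodRep n R g L := exists_goodRep hg
    have e2 : ∃ L, GoodRep n R g' L := exists_goodRep hg'
    dsimp only at heq
    rw [dif_pos e1, dif_pos e2] at heq
    exact code_inj (Classical.choose_spec e1) (Classical.choose_spec e2) heq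
  calc (ball (localNielsen n) R).ncard ≤ _ := key
    _ = (R+1) * (4^R * 2^(n+2*R+1)) := by
        rw [Set.ncard_univ, Nat.card_eq_fintype_card]
        simp [Fintype.card_fun]

/-! ### Final analysis -/

lemma log16_eq : Real.log 16 = Real.log 4 + 2 * Real.log 2 := by
  rw [show (16:ℝ) = 4 * 2^2 by norm_num, Real.log_mul (by norm_num) (by norm_num),
    Real.log_pow]
  push_cast
  ring

lemma tendsto_err (n : ℕ) :
    Filter.Tendsto (fun R : ℕ => (Real.log (R+1) + (n+1) * Real.log 2) / R)
      Filter.atTop (nhds 0) := by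
  have h0 : Filter.Tendsto (fun x : ℝ => Real.log x / x) Filter.atTop (nhds 0) :=
    Real.isLittleO_log_id_atTop.tendsto_div_nhds_zero
  have h1 : Filter.Tendsto (fun x : ℝ => Real.log (x+1) / (x+1)) Filter.atTop (nhds 0) :=
    h0.comp (Filter.tendsto_atTop_add_const_right _ 1 Filter.tendsto_id)
  have h2 : Filter.Tendsto (fun R : ℕ => Real.log (R+1) / (R+1)) Filter.atTop (nhds 0) :=
    h1.comp tendsto_natCast_atTop_atTop
  have h3 : Filter.Tendsto (fun R : ℕ => ((R:ℝ)+1) / R) Filter.atTop (nhds 1) := by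
    have : Filter.Tendsto (fun R : ℕ => 1 + 1/(R:ℝ)) Filter.atTop (nhds (1 + 0)) :=
      tendsto_const_nhds.add tendsto_one_div_atTop_nhds_zero_nat
    rw [add_zero] at this
    refine this.congr' ?_
    filter_upwards [Filter.eventually_ge_atTop 1] with R hR
    have hR0 : (R:ℝ) ≠ 0 := Nat.cast_ne_zero.mpr (by omega)
    field_simp
  have h4 : Filter.Tendsto (fun R : ℕ => Real.log (R+1) / R) Filter.atTop (nhds 0) := by
    have := h2.mul h3
    rw [zero_mul] at this
    refine this.congr fun R => ?_
    rcases Nat.eq_zero_or_pos R with rfl | hR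
    · simp
    · have hR0 : (R:ℝ) ≠ 0 := Nat.cast_ne_zero.mpr (by omega)
      have hR1 : (R:ℝ) + 1 ≠ 0 := by positivity
      field_simp
  have h5 : Filter.Tendsto (fun R : ℕ => ((n:ℝ)+1) * Real.log 2 / R) Filter.atTop (nhds 0) :=
    tendsto_const_div_atTop_nhds_zero_nat _
  have := h4.add h5
  rw [add_zero] at this
  refine this.congr fun R => ?_
  rw [add_div]

theorem autFreeGroup_growth_le' (n : ℕ) (hn : 2 ≤ n) :
    Filter.limsup
        (fun R : ℕ => Real.log ((ball (localNielsen n) R).ncard) / R) Filter.atTop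
      ≤ Real.log 16 + 1 := by
  set f : ℕ → ℝ := fun R => Real.log ((ball (localNielsen n) R).ncard) / R with hf
  have hf0 : ∀ R, 0 ≤ f R := by
    intro R
    exact div_nonneg (Real.log_natCast_nonneg _) (Nat.cast_nonneg _)
  refine Filter.limsup_le_of_le (Filter.isCoboundedUnder_le_of_le Filter.atTop hf0) ?_
  have hev1 : ∀ᶠ R : ℕ in Filter.atTop,
      (Real.log (R+1) + (n+1) * Real.log 2) / R < 1 :=
    (tendsto_err n).eventually_lt_const one_pos
  filter_upwards [hev1, Filter.eventually_ge_atTop 1] with R herr hR1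
  have hRpos : (0:ℝ) < R := by exact_mod_cast hR1
  have hRne : (R:ℝ) ≠ 0 := ne_of_gt hRpos
  have hcard := ball_ncard_le n R
  have hlog : Real.log ((ball (localNielsen n) R).ncard) ≤
      Real.log (R+1) + (n+1) * Real.log 2 + R * Real.log 16 := by
    have hNval : (((R+1) * (4^R * 2^(n+2*R+1)) : ℕ) : ℝ) = ((R:ℝ)+1) * (4^R * 2^(n+2*R+1)) := by
      push_cast
      ring
    have hlogN : Real.log (((R+1) * (4^R * 2^(n+2*R+1)) : ℕ) : ℝ) =
        Real.log (R+1) + (n+1) * Real.log 2 + R * Real.log 16 := by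
      rw [hNval, Real.log_mul (by positivity) (by positivity),
        Real.log_mul (by positivity) (by positivity), Real.log_pow, Real.log_pow, log16_eq]
      push_cast
      ring
    rcases Nat.eq_zero_or_pos (ball (localNielsen n) R).ncard with hz | hpos
    · rw [hz]
      push_cast
      rw [Real.log_zero, ← hlogN]
      exact Real.log_natCast_nonneg _
    · rw [← hlogN]
      apply Real.log_le_log (by exact_mod_cast hpos)
      exact_mod_cast hcard
  calc f R ≤ (Real.log (R+1) + (n+1) * Real.log 2 + R * Real.log 16) / R := by
        rw [hf]
        exact div_le_div_of_nonneg_right hlog hRpos.le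
    _ = (Real.log (R+1) + (n+1) * Real.log 2) / R + Real.log 16 := by
        rw [add_div]
        congr 1
        rw [mul_comm, mul_div_assoc, div_self hRne, mul_one]
    _ ≤ Real.log 16 + 1 := by
        have h16 : 0 ≤ Real.log 16 := Real.log_nonneg (by norm_num)
        linarith [le_of_lt herr]

end AutGrowth

/-- The growth rate of `Aut(F_n)` relative to the local Nielsen generators is at most
`log 16 + 1`. -/
theorem autFreeGroup_growth_le (n : ℕ) (hn : 2 ≤ n) :
    Filter.limsup
        (fun R : ℕ => Real.log ((ball (localNielsen n) R).ncard) / R) Filter.atTop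
      ≤ Real.log 16 + 1 :=
  AutGrowth.autFreeGroup_growth_le' n hn
end
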